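/- arXiv:1908.07512 — 4 statements merged into one kernel-verified Lean document; each statement's English description precedes it below -/
import Mathlib

section
/- For an invertible symmetric matrix A and a unit vector u, the determinant of the compression P_u A P_u of A to the hyperplane {u}^⊥ equals det(A)·⟨u, A⁻¹u⟩. -/
open scoped RealInnerProductSpace

lemma adjugate_inl_inl_eq_det_toBlocks₂₂ {m : Type*} [Fintype m] [DecidableEq m]
    (M : Matrix (Unit ⊕ m) (Unit ⊕ m) ℝ) :
    M.adjugate (Sum.inl ()) (Sum.inl ()) = M.toBlocks₂₂.det := by
  rw [Matrix.adjugate_apply]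
  have h : M.updateRow (Sum.inl ()) (Pi.single (Sum.inl ()) 1)
      = Matrix.fromBlocks 1 0 M.toBlocks₂₁ M.toBlocks₂₂ := by
    ext (i | i) (j | j) <;>
      simp [Matrix.updateRow_apply, Pi.single_apply, Matrix.toBlocks₂₁,
        Matrix.toBlocks₂₂, Matrix.one_apply]
  rw [h, Matrix.det_fromBlocks_zero₁₂]
  simp

/-- For an invertible symmetric matrix `A` and a unit vector `u`, the
determinant of the compression `P_u A P_u` of `A` to the hyperplane `{u}ᗮ` equals
`det A * ⟪u, A⁻¹ u⟫`. -/
theorem det_compression_eq_det_mul_inner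
    {N : ℕ} (A B : EuclideanSpace ℝ (Fin N) →ₗ[ℝ] EuclideanSpace ℝ (Fin N))
    (hsym : ∀ x y, ⟪A x, y⟫ = ⟪x, A y⟫)
    (hAB : A ∘ₗ B = LinearMap.id) (hBA : B ∘ₗ A = LinearMap.id)
    (u : EuclideanSpace ℝ (Fin N)) (hu : ‖u‖ = 1) :
    LinearMap.det
      ((Submodule.orthogonalProjectionOnto (ℝ ∙ u)ᗮ).toLinearMap ∘ₗ A ∘ₗ (ℝ ∙ u)ᗮ.subtype)
      = LinearMap.det A * ⟪u, B u⟫ := by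
  classical
  set V : Submodule ℝ (EuclideanSpace ℝ (Fin N)) := (ℝ ∙ u)ᗮ with hV
  have hu0 : u ≠ 0 := by
    intro h; rw [h, norm_zero] at hu; exact one_ne_zero hu.symm
  -- basis of `ℝ ∙ u` given by `u` itself
  set uu : (ℝ ∙ u) := ⟨u, Submodule.mem_span_singleton_self u⟩ with huu
  have huu0 : uu ≠ 0 := by
    intro h; apply hu0; exact congrArg Subtype.val h
  have hli : LinearIndependent ℝ (fun _ : Unit => uu) :=
    linearIndependent_unique_iff.mpr huu0
  have hsp : ⊤ ≤ Submodule.span ℝ (Set.range fun _ : Unit => uu) := by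
    rintro ⟨x, hx⟩ -
    obtain ⟨c, rfl⟩ := Submodule.mem_span_singleton.mp hx
    have : (⟨c • u, hx⟩ : (ℝ ∙ u)) = c • uu := rfl
    rw [this]
    exact Submodule.smul_mem _ _ (Submodule.subset_span ⟨(), rfl⟩)
  let bu : Module.Basis Unit ℝ (ℝ ∙ u) := Module.Basis.mk hli hsp
  let v : Module.Basis (Fin (Module.finrank ℝ V)) ℝ V := Module.finBasis ℝ V
  have hc : IsCompl (ℝ ∙ u) V := Submodule.isCompl_orthogonal_of_hasOrthogonalProjection
  let e := (ℝ ∙ u).prodEquivOfIsCompl V hc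
  let b : Module.Basis (Unit ⊕ Fin (Module.finrank ℝ V)) ℝ (EuclideanSpace ℝ (Fin N)) :=
    (bu.prod v).map e
  have hb1 : b (Sum.inl ()) = u := by
    simp [b, e, bu, uu, Module.Basis.prod_apply, Submodule.coe_prodEquivOfIsCompl']
  have hb2 : ∀ i, b (Sum.inr i) = (v i : EuclideanSpace ℝ (Fin N)) := by
    intro i
    simp [b, e, Module.Basis.prod_apply, Submodule.coe_prodEquivOfIsCompl']
  set M := LinearMap.toMatrix b b A with hM
  set M' := LinearMap.toMatrix b b B with hM'
  have hMM' : M * M' = 1 := by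
    rw [hM, hM', ← LinearMap.toMatrix_comp b b b, hAB, LinearMap.toMatrix_id]
  have hM'M : M' * M = 1 := by
    rw [hM, hM', ← LinearMap.toMatrix_comp b b b, hBA, LinearMap.toMatrix_id]
  -- key functional identities
  have key2 : ∀ x : EuclideanSpace ℝ (Fin N), ⟪u, x⟫ = b.repr x (Sum.inl ()) := by
    intro x
    have heq : (innerSL ℝ u : EuclideanSpace ℝ (Fin N) →L[ℝ] ℝ).toLinearMap
        = (Finsupp.lapply (Sum.inl ()) : _ →ₗ[ℝ] ℝ) ∘ₗ b.repr.toLinearMap := by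
      apply b.ext
      rintro (⟨⟩ | i)
      · simp only [ContinuousLinearMap.coe_coe, innerSL_apply_apply, LinearMap.comp_apply,
          LinearEquiv.coe_toLinearMap, Finsupp.lapply_apply, Module.Basis.repr_self,
          Finsupp.single_eq_same]
        rw [hb1, real_inner_self_eq_norm_sq, hu]
        norm_num
      · simp only [ContinuousLinearMap.coe_coe, innerSL_apply_apply, LinearMap.comp_apply,
          LinearEquiv.coe_toLinearMap, Finsupp.lapply_apply, Module.Basis.repr_self,
          Finsupp.single_apply, reduceCtorEq, if_false]
        have hv : (v i : EuclideanSpace ℝ (Fin N)) ∈ (ℝ ∙ u)ᗮ := (v i).2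
        rw [hb2]
        exact hv u (Submodule.mem_span_singleton_self u)
    simpa using LinearMap.congr_fun heq x
  have key1 : ∀ (x : EuclideanSpace ℝ (Fin N)) i,
      v.repr (Submodule.orthogonalProjectionOnto V x) i = b.repr x (Sum.inr i) := by
    intro x i
    have heq : (Finsupp.lapply i : _ →ₗ[ℝ] ℝ) ∘ₗ v.repr.toLinearMap ∘ₗ
          (Submodule.orthogonalProjectionOnto V).toLinearMap
        = (Finsupp.lapply (Sum.inr i) : _ →ₗ[ℝ] ℝ) ∘ₗ b.repr.toLinearMap := by
      apply b.ext
      rintro (⟨⟩ | j)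
      · simp only [LinearMap.comp_apply, ContinuousLinearMap.coe_coe,
          LinearEquiv.coe_toLinearMap, Finsupp.lapply_apply, Module.Basis.repr_self,
          Finsupp.single_apply, reduceCtorEq, if_false]
        have h0 : Submodule.orthogonalProjectionOnto V u = 0 :=
          Submodule.orthogonalProjectionOnto_orthogonalComplement_singleton_eq_zero u
        rw [hb1, h0]
        simp
      · simp only [LinearMap.comp_apply, ContinuousLinearMap.coe_coe,
          LinearEquiv.coe_toLinearMap, Finsupp.lapply_apply, Module.Basis.repr_self,
          Finsupp.single_apply, Sum.inr.injEq]
        rw [hb2, Submodule.orthogonalProjectionOnto_mem_subspace_eq_self]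
        simp [Finsupp.single_apply, eq_comm]
    simpa using LinearMap.congr_fun heq x
  -- the compression matrix is the lower-right block
  have hcompr : LinearMap.toMatrix v v
      ((Submodule.orthogonalProjectionOnto V).toLinearMap ∘ₗ A ∘ₗ V.subtype) = M.toBlocks₂₂ := by
    ext i j
    rw [LinearMap.toMatrix_apply]
    simp only [LinearMap.comp_apply, Submodule.subtype_apply,
      ContinuousLinearMap.coe_coe]
    rw [key1 (A (v j)) i]
    rw [Matrix.toBlocks₂₂]
    simp only [Matrix.of_apply]
    rw [hM, LinearMap.toMatrix_apply, hb2]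
  -- adjugate identity
  have hadj : M.adjugate = M.det • M' := by
    have h1 : M' * (M * M.adjugate) = M' * (M.det • 1) := by rw [Matrix.mul_adjugate]
    rw [← Matrix.mul_assoc, hM'M, Matrix.one_mul, Matrix.mul_smul, Matrix.mul_one] at h1
    exact h1
  have hBu : ⟪u, B u⟫ = M' (Sum.inl ()) (Sum.inl ()) := by
    rw [key2, hM', LinearMap.toMatrix_apply, hb1]
  calc (LinearMap.det
        ((Submodule.orthogonalProjectionOnto V).toLinearMap ∘ₗ A ∘ₗ V.subtype))
      = M.toBlocks₂₂.det := by rw [← LinearMap.det_toMatrix v, hcompr]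
    _ = M.adjugate (Sum.inl ()) (Sum.inl ()) :=
        (adjugate_inl_inl_eq_det_toBlocks₂₂ M).symm
    _ = M.det * M' (Sum.inl ()) (Sum.inl ()) := by rw [hadj]; simp
    _ = LinearMap.det A * ⟪u, B u⟫ := by
        rw [hBu, hM, LinearMap.det_toMatrix]
end

section
/- Let H, v, L, J be as above with J(λ) = (1/2)[Nλ − ⟨(H−λ)⁻¹v,v⟩] defined for λ > μ_1 (the largest eigenvalue of H). Then sup over the sphere {⟨σ,σ⟩=N} of L(σ) equals inf over λ > μ_1 of J(λ); moreover if the infimum is attained at λ*, then σ_{λ*} = −(H−λ*)⁻¹v attains the supremum. -/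
open scoped RealInnerProductSpace

set_option maxHeartbeats 1600000

lemma quadBoundAux {N : ℕ} (H : EuclideanSpace ℝ (Fin N) →ₗ[ℝ] EuclideanSpace ℝ (Fin N))
    (hsym : ∀ x y, ⟪H x, y⟫ = ⟪x, H y⟫) {μ₁ : ℝ}
    (hμ₁ : ∀ μ ∈ spectrum ℝ H, μ ≤ μ₁) (x : EuclideanSpace ℝ (Fin N)) :
    ⟪H x, x⟫ ≤ μ₁ * ⟪x, x⟫ := by
  have hS : LinearMap.IsSymmetric H := hsym
  have hn : Module.finrank ℝ (EuclideanSpace ℝ (Fin N)) = N := finrank_euclideanSpace_fin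
  set b := hS.eigenvectorBasis hn with hb
  have hev : ∀ i, hS.eigenvalues hn i ≤ μ₁ := fun i =>
    hμ₁ _ (Module.End.hasEigenvalue_iff_mem_spectrum.mp (hS.hasEigenvalue_eigenvalues hn i))
  have h1 : ⟪H x, x⟫ = ∑ i, hS.eigenvalues hn i * (⟪x, b i⟫ * ⟪x, b i⟫) := by
    rw [← b.sum_inner_mul_inner (H x) x]
    refine Finset.sum_congr rfl fun i _ => ?_
    have h2 : ⟪H x, b i⟫ = hS.eigenvalues hn i * ⟪x, b i⟫ := by
      rw [hsym x (b i), hS.apply_eigenvectorBasis hn i, real_inner_smul_right]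
      norm_num
      exact Or.inl rfl
    rw [h2, real_inner_comm (b i) x]
    ring
  have h3 : ⟪x, x⟫ = ∑ i, ⟪x, b i⟫ * ⟪x, b i⟫ := by
    rw [← b.sum_inner_mul_inner x x]
    exact Finset.sum_congr rfl fun i _ => by rw [real_inner_comm (b i) x]
  rw [h1, h3, Finset.mul_sum]
  refine Finset.sum_le_sum fun i _ => ?_
  exact mul_le_mul_of_nonneg_right (hev i) (mul_self_nonneg _)

/-- Lagrange duality: `sup_{⟪σ,σ⟫ = N} L(σ) = inf_{lam > μ₁} J(lam)` where
`L(σ) = (1/2)⟪Hσ,σ⟫ + ⟪σ,v⟫`, `J(lam) = (1/2)(N·lam - ⟪(H-lam)⁻¹v, v⟫)`, and `μ₁` is the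
largest eigenvalue of `H`. Moreover, if the infimum is attained at `lam*`, then
`σ_{lam*} = -(H - lam*)⁻¹ v` attains the supremum. -/
theorem lagrange_duality_sphere
    {N : ℕ} (hN : 0 < N)
    (H : EuclideanSpace ℝ (Fin N) →ₗ[ℝ] EuclideanSpace ℝ (Fin N))
    (hsym : ∀ x y, ⟪H x, y⟫ = ⟪x, H y⟫)
    (hsimple : ∀ μ ∈ spectrum ℝ H, ∀ x y : EuclideanSpace ℝ (Fin N),
        H x = μ • x → H y = μ • y → ∃ t : ℝ, x = t • y ∨ y = t • x)
    (v : EuclideanSpace ℝ (Fin N)) (hv0 : v ≠ 0)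
    (hv : ∀ μ : ℝ, H v ≠ μ • v)
    (μ₁ : ℝ) (hμ₁mem : μ₁ ∈ spectrum ℝ H) (hμ₁ : ∀ μ ∈ spectrum ℝ H, μ ≤ μ₁)
    (R : ℝ → (EuclideanSpace ℝ (Fin N) →ₗ[ℝ] EuclideanSpace ℝ (Fin N)))
    (hR : ∀ lam, μ₁ < lam →
      (H - lam • LinearMap.id) ∘ₗ R lam = LinearMap.id ∧
      R lam ∘ₗ (H - lam • LinearMap.id) = LinearMap.id)
    (L J : _) 
    (hL : L = fun σ : EuclideanSpace ℝ (Fin N) => (1 / 2) * ⟪H σ, σ⟫ + ⟪σ, v⟫)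
    (hJ : J = fun lam : ℝ => (1 / 2) * ((N : ℝ) * lam - ⟪R lam v, v⟫)) :
    sSup (L '' {σ | ⟪σ, σ⟫ = (N : ℝ)}) = sInf (J '' Set.Ioi μ₁) ∧
    ∀ lam', μ₁ < lam' → (∀ lam, μ₁ < lam → J lam' ≤ J lam) →
      ⟪(-(R lam' v) : EuclideanSpace ℝ (Fin N)), -(R lam' v)⟫ = (N : ℝ) ∧
      ∀ σ : EuclideanSpace ℝ (Fin N), ⟪σ, σ⟫ = (N : ℝ) → L σ ≤ L (-(R lam' v)) := by
  have quad : ∀ x : EuclideanSpace ℝ (Fin N), ⟪H x, x⟫ ≤ μ₁ * ⟪x, x⟫ :=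
    quadBoundAux H hsym hμ₁
  have key1 : ∀ lam, μ₁ < lam → ∀ x, H (R lam x) - lam • (R lam x) = x := by
    intro lam hl x
    have := LinearMap.congr_fun (hR lam hl).1 x
    simpa using this
  have key2 : ∀ lam, μ₁ < lam → ∀ x, R lam (H x - lam • x) = x := by
    intro lam hl x
    have := LinearMap.congr_fun (hR lam hl).2 x
    simpa using this
  -- symmetry of R lam
  have rsym : ∀ lam, μ₁ < lam → ∀ x y, ⟪R lam x, y⟫ = ⟪x, R lam y⟫ := by
    intro lam hl x y
    have h1 : y = H (R lam y) - lam • (R lam y) := (key1 lam hl y).symm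
    have h2 : x = H (R lam x) - lam • (R lam x) := (key1 lam hl x).symm
    calc ⟪R lam x, y⟫ = ⟪R lam x, H (R lam y) - lam • (R lam y)⟫ := by rw [← h1]
      _ = ⟪H (R lam x) - lam • (R lam x), R lam y⟫ := by
            rw [inner_sub_right, inner_sub_left, real_inner_smul_right, real_inner_smul_left,
              hsym (R lam x) (R lam y)]
      _ = ⟪x, R lam y⟫ := by rw [← h2]
  -- norm bound
  have rbound : ∀ lam, μ₁ < lam → ∀ y, ‖R lam y‖ ≤ ‖y‖ / (lam - μ₁) := by
    intro lam hl y
    set x := R lam y with hx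
    have hq := quad x
    have h1 : ⟪y, x⟫ = ⟪H x, x⟫ - lam * ⟪x, x⟫ := by
      rw [← key1 lam hl y, inner_sub_left, real_inner_smul_left]
    have hcs : |⟪y, x⟫| ≤ ‖y‖ * ‖x‖ := abs_real_inner_le_norm y x
    have hxx : ⟪x, x⟫ = ‖x‖ ^ 2 := real_inner_self_eq_norm_sq x
    have h2 : (lam - μ₁) * ‖x‖ ^ 2 ≤ ‖y‖ * ‖x‖ := by
      have : -(‖y‖ * ‖x‖) ≤ ⟪y, x⟫ := neg_le_of_abs_le hcs
      nlinarith
    have h3 : (lam - μ₁) * ‖x‖ ≤ ‖y‖ := by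
      rcases eq_or_lt_of_le (norm_nonneg x) with h | h
      · rw [← h]; simpa using norm_nonneg y
      · nlinarith
    rw [le_div_iff₀ (by linarith)]
    linarith [h3]
  -- resolvent identity
  have resid : ∀ a b, μ₁ < a → μ₁ < b → ∀ u,
      R a u = R b u + (a - b) • R a (R b u) := by
    intro a b ha hb u
    set w := R b u with hw
    have h1 : u = H w - b • w := (key1 b hb u).symm
    have h2 : R a (H w - a • w) = w := key2 a ha w
    have h3 : R a (H w) = w + a • R a w := by
      have := h2
      rw [map_sub, map_smul] at this
      have := sub_eq_iff_eq_add.mp this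
      linear_combination (norm := module) this
    rw [h1, map_sub, map_smul, h3]
    module
  have keyid : ∀ lam, μ₁ < lam → ∀ σ : EuclideanSpace ℝ (Fin N), ⟪σ, σ⟫ = (N : ℝ) →
      2 * J lam - 2 * L σ = ⟪lam • (σ + R lam v) - H (σ + R lam v), σ + R lam v⟫ := by
    intro lam hl σ hσ
    set r := R lam v with hr
    have hHr : H r = v + lam • r := by
      have h := key1 lam hl v
      exact sub_eq_iff_eq_add.mp h
    have h1 : ⟪H σ, r⟫ = ⟪σ, v⟫ + lam * ⟪σ, r⟫ := by
      rw [hsym σ r, hHr, inner_add_right, real_inner_smul_right]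
    simp only [hL, hJ]
    rw [map_add, hHr]
    simp only [inner_sub_left, inner_add_left, inner_add_right, real_inner_smul_left,
      real_inner_smul_right]
    linear_combination -lam * hσ + h1 - real_inner_comm v σ - real_inner_comm v r
  have posd : ∀ lam, μ₁ < lam → ∀ d : EuclideanSpace ℝ (Fin N),
      (lam - μ₁) * ⟪d, d⟫ ≤ ⟪lam • d - H d, d⟫ := by
    intro lam hl d
    rw [inner_sub_left, real_inner_smul_left]
    nlinarith [quad d]
  have weak : ∀ lam, μ₁ < lam → ∀ σ : EuclideanSpace ℝ (Fin N), ⟪σ, σ⟫ = (N : ℝ) →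
      L σ ≤ J lam := by
    intro lam hl σ hσ
    have h1 := keyid lam hl σ hσ
    have h2 := posd lam hl (σ + R lam v)
    have h3 : (0:ℝ) ≤ ⟪σ + R lam v, σ + R lam v⟫ := real_inner_self_nonneg
    nlinarith
  have Leq : ∀ lam, μ₁ < lam → ⟪R lam v, R lam v⟫ = (N : ℝ) →
      L (-(R lam v)) = J lam := by
    intro lam hl hn
    have hσ : ⟪(-(R lam v) : EuclideanSpace ℝ (Fin N)), -(R lam v)⟫ = (N : ℝ) := by
      rw [inner_neg_neg]; exact hn
    have h1 := keyid lam hl (-(R lam v)) hσ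
    rw [neg_add_cancel] at h1
    simp only [smul_zero, map_zero, sub_zero, inner_zero_left] at h1
    linarith
  have part2 : ∀ lamPrime, μ₁ < lamPrime → (∀ lam, μ₁ < lam → J lamPrime ≤ J lam) →
      ⟪(-(R lamPrime v) : EuclideanSpace ℝ (Fin N)), -(R lamPrime v)⟫ = (N : ℝ) ∧
      ∀ σ : EuclideanSpace ℝ (Fin N), ⟪σ, σ⟫ = (N : ℝ) → L σ ≤ L (-(R lamPrime v)) := by
    have squeeze : ∀ a b C D : ℝ, 0 ≤ C → 0 < D →
        (∀ δ : ℝ, 0 < δ → δ < D → a ≤ b + δ * C) → a ≤ b := by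
      intro a b C D hC hD h
      refine le_of_forall_pos_le_add fun ε hε => ?_
      have hδ0 : 0 < min (D / 2) (ε / (C + 1)) := lt_min (by linarith) (by positivity)
      have h1 := h _ hδ0 (lt_of_le_of_lt (min_le_left _ _) (by linarith))
      have h2 : min (D / 2) (ε / (C + 1)) * C ≤ ε := by
        calc min (D / 2) (ε / (C + 1)) * C ≤ ε / (C + 1) * C :=
              mul_le_mul_of_nonneg_right (min_le_right _ _) hC
          _ ≤ ε := by rw [div_mul_eq_mul_div, div_le_iff₀ (by linarith)]; nlinarith
      linarith
    intro lam' hl' hmin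
    set w := R lam' v with hw
    have hK0 : (0:ℝ) ≤ ‖w‖ * ‖v‖ := mul_nonneg (norm_nonneg _) (norm_nonneg _)
    have hP0 : (0:ℝ) < lam' - μ₁ := by linarith
    have hPP : (0:ℝ) < (lam' - μ₁) * (lam' - μ₁) := mul_pos hP0 hP0
    have hmin' : ∀ lam, μ₁ < lam → 0 ≤ (lam - lam') * ((N : ℝ) - ⟪R lam w, v⟫) := by
      intro lam hl
      have h := resid lam lam' hl hl' v
      have h2 : ⟪R lam v, v⟫ = ⟪w, v⟫ + (lam - lam') * ⟪R lam w, v⟫ := by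
        rw [h, inner_add_left, real_inner_smul_left]
      have h3 := hmin lam hl
      simp only [hJ] at h3
      rw [h2] at h3
      nlinarith [h3]
    have hRw : ⟪R lam' w, v⟫ = ⟪w, w⟫ := by rw [rsym lam' hl' w v]
    have bnd : ∀ lam, μ₁ < lam →
        |⟪R lam w, v⟫ - ⟪w, w⟫| * ((lam - μ₁) * (lam' - μ₁)) ≤ |lam - lam'| * (‖w‖ * ‖v‖) := by
      intro lam hl
      have h := resid lam lam' hl hl' w
      have h2 : ⟪R lam w, v⟫ - ⟪w, w⟫ = (lam - lam') * ⟪R lam (R lam' w), v⟫ := by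
        rw [← hRw, h, inner_add_left, real_inner_smul_left]; ring
      have hb1 : |⟪R lam (R lam' w), v⟫| ≤ ‖R lam (R lam' w)‖ * ‖v‖ :=
        abs_real_inner_le_norm _ _
      have hl0 : (0:ℝ) < lam - μ₁ := by linarith
      have hb2 : ‖R lam (R lam' w)‖ * (lam - μ₁) ≤ ‖R lam' w‖ := by
        have := rbound lam hl (R lam' w)
        rw [le_div_iff₀ hl0] at this
        linarith
      have hb3 : ‖R lam' w‖ * (lam' - μ₁) ≤ ‖w‖ := by
        have := rbound lam' hl' w
        rw [le_div_iff₀ hP0] at this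
        linarith
      have key : |⟪R lam (R lam' w), v⟫| * ((lam - μ₁) * (lam' - μ₁)) ≤ ‖w‖ * ‖v‖ := by
        calc |⟪R lam (R lam' w), v⟫| * ((lam - μ₁) * (lam' - μ₁))
            ≤ ‖R lam (R lam' w)‖ * ‖v‖ * ((lam - μ₁) * (lam' - μ₁)) :=
              mul_le_mul_of_nonneg_right hb1 (le_of_lt (mul_pos hl0 hP0))
          _ = ‖R lam (R lam' w)‖ * (lam - μ₁) * (‖v‖ * (lam' - μ₁)) := by ring
          _ ≤ ‖R lam' w‖ * (‖v‖ * (lam' - μ₁)) :=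
              mul_le_mul_of_nonneg_right hb2 (by positivity)
          _ = ‖R lam' w‖ * (lam' - μ₁) * ‖v‖ := by ring
          _ ≤ ‖w‖ * ‖v‖ := mul_le_mul_of_nonneg_right hb3 (norm_nonneg _)
      rw [h2, abs_mul, mul_assoc]
      exact mul_le_mul_of_nonneg_left key (abs_nonneg _)
    have hww : ⟪w, w⟫ = (N : ℝ) := by
      have hle : ⟪w, w⟫ ≤ (N : ℝ) := by
        refine squeeze _ _ (‖w‖ * ‖v‖ / ((lam' - μ₁) * (lam' - μ₁))) 1 (by positivity)
          one_pos fun δ hδ0 _ => ?_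
        have hl : μ₁ < lam' + δ := by linarith
        have h1 := hmin' (lam' + δ) hl
        have h2 := bnd (lam' + δ) hl
        have hg : ⟪R (lam' + δ) w, v⟫ ≤ (N : ℝ) := by nlinarith [h1]
        have habs1 : ⟪w, w⟫ - ⟪R (lam' + δ) w, v⟫ ≤ |⟪R (lam' + δ) w, v⟫ - ⟪w, w⟫| := by
          rw [abs_sub_comm]; exact le_abs_self _
        have habs2 : |lam' + δ - lam'| = δ := by
          rw [show lam' + δ - lam' = δ by ring, abs_of_pos hδ0]
        rw [habs2] at h2
        have h3 : (⟪w, w⟫ - ⟪R (lam' + δ) w, v⟫) * ((lam' - μ₁) * (lam' - μ₁)) ≤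
            δ * (‖w‖ * ‖v‖) := by
          nlinarith [mul_le_mul_of_nonneg_right habs1 hPP.le,
            mul_nonneg (mul_nonneg (abs_nonneg (⟪R (lam' + δ) w, v⟫ - ⟪w, w⟫)) hδ0.le) hP0.le]
        have h4 : ⟪w, w⟫ - ⟪R (lam' + δ) w, v⟫ ≤ δ * (‖w‖ * ‖v‖ / ((lam' - μ₁) * (lam' - μ₁))) := by
          rw [mul_div_assoc', le_div_iff₀ hPP]
          linarith
        linarith
      have hge : (N : ℝ) ≤ ⟪w, w⟫ := by
        refine squeeze _ _ (2 * (‖w‖ * ‖v‖) / ((lam' - μ₁) * (lam' - μ₁))) ((lam' - μ₁) / 2)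
          (by positivity) (by linarith) fun δ hδ0 hδD => ?_
        have hl : μ₁ < lam' - δ := by linarith
        have h1 := hmin' (lam' - δ) hl
        have h2 := bnd (lam' - δ) hl
        have hg : (N : ℝ) ≤ ⟪R (lam' - δ) w, v⟫ := by nlinarith [h1]
        have habs1 : ⟪R (lam' - δ) w, v⟫ - ⟪w, w⟫ ≤ |⟪R (lam' - δ) w, v⟫ - ⟪w, w⟫| := le_abs_self _
        have habs2 : |lam' - δ - lam'| = δ := by
          rw [show lam' - δ - lam' = -δ by ring, abs_neg, abs_of_pos hδ0]
        rw [habs2] at h2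
        have hfac : (lam' - μ₁) * (lam' - μ₁) / 2 ≤ (lam' - δ - μ₁) * (lam' - μ₁) := by
          nlinarith [mul_nonneg hP0.le (by linarith : (0:ℝ) ≤ (lam' - μ₁) / 2 - δ)]
        have h3 : (⟪R (lam' - δ) w, v⟫ - ⟪w, w⟫) * ((lam' - μ₁) * (lam' - μ₁) / 2) ≤
            δ * (‖w‖ * ‖v‖) := by
          nlinarith [mul_le_mul_of_nonneg_right habs1 (by positivity : (0:ℝ) ≤ (lam' - μ₁) * (lam' - μ₁) / 2),
            mul_le_mul_of_nonneg_left hfac (abs_nonneg (⟪R (lam' - δ) w, v⟫ - ⟪w, w⟫))]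
        have h4 : ⟪R (lam' - δ) w, v⟫ - ⟪w, w⟫ ≤
            δ * (2 * (‖w‖ * ‖v‖) / ((lam' - μ₁) * (lam' - μ₁))) := by
          rw [mul_div_assoc', le_div_iff₀ hPP]
          linarith
        linarith
      linarith
    have hmem : ⟪(-w : EuclideanSpace ℝ (Fin N)), -w⟫ = (N : ℝ) := by
      rw [inner_neg_neg]; exact hww
    refine ⟨hmem, fun σ hσ => ?_⟩
    calc L σ ≤ J lam' := weak lam' hl' σ hσ
      _ = L (-w) := (Leq lam' hl' hww).symm
  refine ⟨?_, part2⟩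
  have hNR : (0:ℝ) < N := Nat.cast_pos.mpr hN
  obtain ⟨σ₀, hσ₀⟩ : ∃ σ₀ : EuclideanSpace ℝ (Fin N), ⟪σ₀, σ₀⟫ = (N : ℝ) := by
    refine ⟨EuclideanSpace.single ⟨0, hN⟩ (Real.sqrt N), ?_⟩
    rw [EuclideanSpace.inner_single_left]
    simp [EuclideanSpace.single_apply, Real.mul_self_sqrt hNR.le]
  have hSne : (L '' {σ | ⟪σ, σ⟫ = (N : ℝ)}).Nonempty := ⟨L σ₀, ⟨σ₀, hσ₀, rfl⟩⟩
  have hJne : (J '' Set.Ioi μ₁).Nonempty := ⟨J (μ₁ + 1), ⟨μ₁ + 1, by simp, rfl⟩⟩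
  have hBddA : BddAbove (L '' {σ | ⟪σ, σ⟫ = (N : ℝ)}) := by
    refine ⟨J (μ₁ + 1), fun x ⟨σ, hσ, hx⟩ => ?_⟩
    rw [← hx]; exact weak (μ₁ + 1) (by linarith) σ hσ
  have hBddB : BddBelow (J '' Set.Ioi μ₁) := by
    refine ⟨L σ₀, fun x ⟨lam, hlam, hx⟩ => ?_⟩
    rw [← hx]; exact weak lam hlam σ₀ hσ₀
  have hwd : sSup (L '' {σ | ⟪σ, σ⟫ = (N : ℝ)}) ≤ sInf (J '' Set.Ioi μ₁) := by
    refine csSup_le hSne fun x ⟨σ, hσ, hx⟩ => le_csInf hJne fun y ⟨lam, hlam, hy⟩ => ?_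
    rw [← hx, ← hy]; exact weak lam hlam σ hσ
  -- continuity of lam ↦ R lam v on Ioi μ₁
  have hcont : ContinuousOn (fun lam => (R lam v : EuclideanSpace ℝ (Fin N))) (Set.Ioi μ₁) := by
    intro b hb
    rw [Metric.continuousWithinAt_iff]
    intro ε hε
    simp only [Set.mem_Ioi] at hb
    refine ⟨min ((b - μ₁) / 2) (ε * (b - μ₁) / (2 * (‖R b v‖ + 1))),
      lt_min (by linarith)
        (div_pos (mul_pos hε (by linarith)) (by positivity)),
      fun x hx hdist => ?_⟩
    simp only [Set.mem_Ioi] at hx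
    have hd1 : |x - b| < (b - μ₁) / 2 :=
      lt_of_lt_of_le hdist (min_le_left _ _)
    have hd2 : |x - b| < ε * (b - μ₁) / (2 * (‖R b v‖ + 1)) :=
      lt_of_lt_of_le hdist (min_le_right _ _)
    have hxb : (b - μ₁) / 2 < x - μ₁ := by
      have := abs_lt.mp hd1
      cases this; linarith
    rw [dist_eq_norm]
    have h1 : R x v - R b v = (x - b) • R x (R b v) := by
      rw [resid x b hx hb v]; abel
    rw [h1, norm_smul, Real.norm_eq_abs]
    have h2 : ‖R x (R b v)‖ ≤ ‖R b v‖ / (x - μ₁) := rbound x hx (R b v)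
    have h3 : ‖R b v‖ / (x - μ₁) ≤ ‖R b v‖ / ((b - μ₁) / 2) := by
      apply div_le_div_of_nonneg_left (norm_nonneg _) (by linarith) (le_of_lt hxb)
    have h4 : |x - b| * ‖R x (R b v)‖ ≤ |x - b| * (‖R b v‖ / ((b - μ₁) / 2)) :=
      mul_le_mul_of_nonneg_left (le_trans h2 h3) (abs_nonneg _)
    have h5 : |x - b| * (‖R b v‖ / ((b - μ₁) / 2)) < ε := by
      have hB2 : (0:ℝ) < (b - μ₁) / 2 := by linarith
      rw [← mul_div_assoc, div_lt_iff₀ hB2]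
      rw [lt_div_iff₀ (by positivity)] at hd2
      nlinarith [abs_nonneg (x - b)]
    calc |x - b| * ‖R x (R b v)‖ ≤ _ := h4
      _ < ε := h5
  refine le_antisymm hwd ?_
  by_cases hA : ∃ lam₀, μ₁ < lam₀ ∧ (N : ℝ) ≤ ‖R lam₀ v‖ ^ 2
  · obtain ⟨lam₀, hlam₀, hge⟩ := hA
    have hΛμ : μ₁ < max lam₀ (μ₁ + 1 + ‖v‖) :=
      lt_of_lt_of_le (by nlinarith [norm_nonneg v]) (le_max_right _ _)
    set Λ := max lam₀ (μ₁ + 1 + ‖v‖) with hΛ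
    have hΛ1 : lam₀ ≤ Λ := le_max_left _ _
    have hΛv : ‖R Λ v‖ ^ 2 ≤ (N : ℝ) := by
      have h1 := rbound Λ hΛμ v
      have h2 : 1 + ‖v‖ ≤ Λ - μ₁ := by
        have := le_max_right lam₀ (μ₁ + 1 + ‖v‖); linarith
      have h3 : ‖v‖ / (Λ - μ₁) ≤ ‖v‖ / (1 + ‖v‖) :=
        div_le_div_of_nonneg_left (norm_nonneg _) (by positivity) h2
      have h4 : ‖v‖ / (1 + ‖v‖) < 1 := by
        rw [div_lt_iff₀ (by positivity)]; linarith
      have h5 : (1:ℝ) ≤ N := by exact_mod_cast hN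
      nlinarith [norm_nonneg (R Λ v)]
    have hcont2 : ContinuousOn (fun lam => ‖R lam v‖ ^ 2) (Set.Icc lam₀ Λ) := by
      refine ContinuousOn.pow (ContinuousOn.norm (hcont.mono fun x hx => ?_)) 2
      exact Set.mem_Ioi.mpr (lt_of_lt_of_le hlam₀ hx.1)
    have hmemN : (N : ℝ) ∈ Set.Icc (‖R Λ v‖ ^ 2) (‖R lam₀ v‖ ^ 2) := ⟨hΛv, hge⟩
    obtain ⟨lamS, hlamSmem, hlamSeq⟩ := intermediate_value_Icc' hΛ1 hcont2 hmemN
    have hlS : μ₁ < lamS := lt_of_lt_of_le hlam₀ hlamSmem.1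
    have hnn : ⟪R lamS v, R lamS v⟫ = (N : ℝ) := by
      rw [real_inner_self_eq_norm_sq]; exact hlamSeq
    calc sInf (J '' Set.Ioi μ₁) ≤ J lamS := csInf_le hBddB ⟨lamS, Set.mem_Ioi.mpr hlS, rfl⟩
      _ = L (-(R lamS v)) := (Leq lamS hlS hnn).symm
      _ ≤ sSup (L '' {σ | ⟪σ, σ⟫ = (N : ℝ)}) := by
          refine le_csSup hBddA ⟨-(R lamS v), ?_, rfl⟩
          show ⟪(-(R lamS v) : EuclideanSpace ℝ (Fin N)), -(R lamS v)⟫ = (N : ℝ)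
          rw [inner_neg_neg]; exact hnn
  · push_neg at hA
    -- top eigenvector
    have hev : Module.End.HasEigenvalue H μ₁ :=
      Module.End.hasEigenvalue_iff_mem_spectrum.mpr hμ₁mem
    obtain ⟨e, heH, hee⟩ : ∃ e : EuclideanSpace ℝ (Fin N), H e = μ₁ • e ∧ ‖e‖ = 1 := by
      obtain ⟨x, hx⟩ := hev.exists_hasEigenvector
      have hxH : H x = μ₁ • x := Module.End.mem_eigenspace_iff.mp hx.1
      refine ⟨‖x‖⁻¹ • x, ?_, norm_smul_inv_norm hx.2⟩
      rw [map_smul, hxH, smul_comm]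
    have hRe : ∀ lam, μ₁ < lam → R lam e = (μ₁ - lam)⁻¹ • e := by
      intro lam hl
      have hne : μ₁ - lam ≠ 0 := by intro h; linarith [sub_eq_zero.mp h]
      have heq : H ((μ₁ - lam)⁻¹ • e) - lam • ((μ₁ - lam)⁻¹ • e) = e := by
        rw [map_smul, heH, smul_smul, smul_smul, ← sub_smul]
        have : (μ₁ - lam)⁻¹ * μ₁ - lam * (μ₁ - lam)⁻¹ = 1 := by field_simp
        rw [this, one_smul]
      calc R lam e = R lam (H ((μ₁ - lam)⁻¹ • e) - lam • ((μ₁ - lam)⁻¹ • e)) := by rw [heq]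
        _ = (μ₁ - lam)⁻¹ • e := key2 lam hl _
    have hret : ∀ lam, μ₁ < lam → ⟪R lam v, e⟫ = (μ₁ - lam)⁻¹ * ⟪v, e⟫ := by
      intro lam hl
      rw [rsym lam hl v e, hRe lam hl, real_inner_smul_right]
    have hve : ⟪v, e⟫ = 0 := by
      by_contra hve0
      have hq : 0 < |⟪v, e⟫| := abs_pos.mpr hve0
      have hsq : 0 < Real.sqrt (N : ℝ) := Real.sqrt_pos.mpr hNR
      set lam := μ₁ + |⟪v, e⟫| / Real.sqrt (N : ℝ) with hlamd
      have hl : μ₁ < lam := by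
        rw [hlamd]; linarith [div_pos hq hsq]
      have hlt := hA lam hl
      have hcs : |⟪R lam v, e⟫| ≤ ‖R lam v‖ := by
        have h := abs_real_inner_le_norm (R lam v) e
        rw [hee, mul_one] at h; exact h
      have hval : |⟪R lam v, e⟫| = Real.sqrt (N : ℝ) := by
        rw [hret lam hl, abs_mul, abs_inv, abs_sub_comm,
          abs_of_pos (by linarith : (0:ℝ) < lam - μ₁)]
        rw [show lam - μ₁ = |⟪v, e⟫| / Real.sqrt (N : ℝ) by rw [hlamd]; ring]
        rw [inv_div, div_mul_cancel₀ _ hq.ne']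
      nlinarith [Real.sq_sqrt hNR.le, norm_nonneg (R lam v)]
    have hRve : ∀ lam, μ₁ < lam → ⟪R lam v, e⟫ = 0 := by
      intro lam hl; rw [hret lam hl, hve, mul_zero]
    have hstep : ∀ lam, μ₁ < lam →
        sInf (J '' Set.Ioi μ₁) ≤ sSup (L '' {σ | ⟪σ, σ⟫ = (N : ℝ)}) + (N : ℝ) / 2 * (lam - μ₁) := by
      intro lam hl
      have hlt := hA lam hl
      set t := Real.sqrt ((N : ℝ) - ‖R lam v‖ ^ 2) with ht
      have ht2 : t ^ 2 = (N : ℝ) - ‖R lam v‖ ^ 2 :=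
        Real.sq_sqrt (by linarith)
      set τ : EuclideanSpace ℝ (Fin N) := -(R lam v) + t • e with hτd
      have hre : ⟪R lam v, e⟫ = 0 := hRve lam hl
      have her : ⟪e, R lam v⟫ = 0 := by rw [real_inner_comm]; exact hre
      have heee : ⟪e, e⟫ = (1:ℝ) := by
        rw [real_inner_self_eq_norm_sq, hee]; norm_num
      have hτ : ⟪τ, τ⟫ = (N : ℝ) := by
        rw [hτd]
        simp only [inner_add_left, inner_add_right, inner_neg_left, inner_neg_right,
          real_inner_smul_left, real_inner_smul_right, hre, her, heee]
        rw [real_inner_self_eq_norm_sq]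
        nlinarith [ht2]
      have hd : τ + R lam v = t • e := by rw [hτd]; abel
      have hkey := keyid lam hl τ hτ
      rw [hd] at hkey
      have hcomp : ⟪lam • (t • e) - H (t • e), t • e⟫ = t ^ 2 * (lam - μ₁) := by
        rw [map_smul, heH]
        simp only [inner_sub_left, real_inner_smul_left, real_inner_smul_right, heee]
        ring
      rw [hcomp] at hkey
      have hLτ : L τ ≤ sSup (L '' {σ | ⟪σ, σ⟫ = (N : ℝ)}) := le_csSup hBddA ⟨τ, hτ, rfl⟩
      have hJlam : sInf (J '' Set.Ioi μ₁) ≤ J lam := csInf_le hBddB ⟨lam, Set.mem_Ioi.mpr hl, rfl⟩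
      have htN : t ^ 2 ≤ (N : ℝ) := by nlinarith [sq_nonneg ‖R lam v‖]
      nlinarith [sq_nonneg t]
    refine le_of_forall_pos_le_add fun ε hε => ?_
    have hstep2 := hstep (μ₁ + 2 * ε / (N : ℝ))
      (by have h0 : (0:ℝ) < 2 * ε / (N : ℝ) := by positivity
          linarith)
    have heq2 : (N : ℝ) / 2 * (μ₁ + 2 * ε / (N : ℝ) - μ₁) = ε := by
      have h1 : μ₁ + 2 * ε / (N : ℝ) - μ₁ = 2 * ε / (N : ℝ) := by ring
      rw [h1]
      field_simp
    rw [heq2] at hstep2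
    exact hstep2
end

section
/- Let F_N : (a,b) → ℝ be a sequence of convex functions on an open interval, each tending to +∞ at both endpoints, converging pointwise to a convex function F with the same properties, and let x* be the unique minimizer of F. Let c_N → c with c > F(x*). Then for each sign s ∈ {+,−} there is a unique y^s with F(y^s)=c and sign of F at y^s matching s (i.e. y^− < x* < y^+), and for N large there are unique points y_N^s with F_N(y_N^s)=c_N on the corresponding side of the minimizer of F_N, and y_N^s → y^s. -/
open Filter Set Topology

/-- Convex combination lemma: if `x < y < m` in a convex set, then `g y` is bounded
by a strict convex combination of `g x` and `g m`. -/
lemma convex_combo_aux {g : ℝ → ℝ} {s : Set ℝ} (hg : ConvexOn ℝ s g) {x y m : ℝ}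
    (hx : x ∈ s) (hm : m ∈ s) (hxy : x < y) (hym : y < m) :
    ∃ t : ℝ, 0 < t ∧ t < 1 ∧ g y ≤ t * g x + (1 - t) * g m := by
  have hxm : x < m := hxy.trans hym
  have hmx : (0:ℝ) < m - x := by linarith
  refine ⟨(m - y) / (m - x), div_pos (by linarith) hmx,
    (div_lt_one hmx).2 (by linarith), ?_⟩
  have hb0 : (0:ℝ) ≤ (y - x) / (m - x) := div_nonneg (by linarith) hmx.le
  have ha0 : (0:ℝ) ≤ (m - y) / (m - x) := div_nonneg (by linarith) hmx.le
  have hsum : (m - y) / (m - x) + (y - x) / (m - x) = 1 := by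
    field_simp
    ring
  have hcomb : ((m - y) / (m - x)) • x + ((y - x) / (m - x)) • m = y := by
    simp only [smul_eq_mul]
    field_simp
    ring
  have h := hg.2 hx hm ha0 hb0 hsum
  rw [hcomb] at h
  simp only [smul_eq_mul] at h
  have hb : (y - x) / (m - x) = 1 - (m - y) / (m - x) := by linarith
  rw [hb] at h
  exact h

lemma between_lt_aux {g : ℝ → ℝ} {s : Set ℝ} (hg : ConvexOn ℝ s g) {x y m c : ℝ}
    (hx : x ∈ s) (hm : m ∈ s) (hxy : x < y) (hym : y < m)
    (hgx : g x ≤ c) (hgm : g m ≤ c) (hstrict : g x < c ∨ g m < c) : g y < c := by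
  obtain ⟨t, ht0, ht1, hle⟩ := convex_combo_aux hg hx hm hxy hym
  rcases hstrict with h | h <;> nlinarith

lemma outside_gt_left_aux {g : ℝ → ℝ} {s : Set ℝ} (hg : ConvexOn ℝ s g) {x y m c : ℝ}
    (hx : x ∈ s) (hm : m ∈ s) (hxy : x < y) (hym : y < m)
    (hgy : c ≤ g y) (hgm : g m < c) : c < g x := by
  obtain ⟨t, ht0, ht1, hle⟩ := convex_combo_aux hg hx hm hxy hym
  nlinarith

lemma outside_gt_right_aux {g : ℝ → ℝ} {s : Set ℝ} (hg : ConvexOn ℝ s g) {x y m c : ℝ}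
    (hx : x ∈ s) (hm : m ∈ s) (hxy : x < y) (hym : y < m)
    (hgy : c ≤ g y) (hgx : g x < c) : c < g m := by
  obtain ⟨t, ht0, ht1, hle⟩ := convex_combo_aux hg hx hm hxy hym
  nlinarith

/-- Let `F_N` be convex functions on `(a,b)` blowing up at both endpoints,
converging pointwise to such a convex function `F` with unique minimizer `x*`, and let
`c_N → c > F x*`. Then `F = c` has a unique solution `y⁻` left of `x*` and a unique
solution `y⁺` right of `x*`, and for `N` large `F_N = c_N` has exactly two solutions
`u N < v N`, which converge to `y⁻` and `y⁺` respectively. -/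
theorem convex_level_set_convergence
    (a b : ℝ) (hab : a < b)
    (F : ℝ → ℝ) (FN : ℕ → ℝ → ℝ)
    (hFconv : ConvexOn ℝ (Ioo a b) F)
    (hFNconv : ∀ N, ConvexOn ℝ (Ioo a b) (FN N))
    (hFa : Tendsto F (nhdsWithin a (Ioo a b)) atTop)
    (hFb : Tendsto F (nhdsWithin b (Ioo a b)) atTop)
    (hFNa : ∀ N, Tendsto (FN N) (nhdsWithin a (Ioo a b)) atTop)
    (hFNb : ∀ N, Tendsto (FN N) (nhdsWithin b (Ioo a b)) atTop)
    (hpt : ∀ x ∈ Ioo a b, Tendsto (fun N => FN N x) atTop (nhds (F x)))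
    (xstar : ℝ) (hxstar : xstar ∈ Ioo a b)
    (hmin : ∀ x ∈ Ioo a b, x ≠ xstar → F xstar < F x)
    (c : ℝ) (cN : ℕ → ℝ) (hcN : Tendsto cN atTop (nhds c)) (hc : F xstar < c) :
    ∃ yminus yplus : ℝ,
      yminus ∈ Ioo a xstar ∧ yplus ∈ Ioo xstar b ∧
      F yminus = c ∧ F yplus = c ∧
      (∀ z ∈ Ioo a xstar, F z = c → z = yminus) ∧
      (∀ z ∈ Ioo xstar b, F z = c → z = yplus) ∧
      ∃ u v : ℕ → ℝ,
        Tendsto u atTop (nhds yminus) ∧ Tendsto v atTop (nhds yplus) ∧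
        ∀ᶠ N in atTop,
          u N ∈ Ioo a b ∧ v N ∈ Ioo a b ∧ u N < v N ∧
          FN N (u N) = cN N ∧ FN N (v N) = cN N ∧
          ∀ z ∈ Ioo a b, FN N z = cN N → z = u N ∨ z = v N := by
  classical
  obtain ⟨hax, hxb⟩ := hxstar
  have hIooL : Ioo a xstar ⊆ Ioo a b := fun w hw => ⟨hw.1, hw.2.trans hxb⟩
  have hIooR : Ioo xstar b ⊆ Ioo a b := fun w hw => ⟨hax.trans hw.1, hw.2⟩
  have hFc : ContinuousOn F (Ioo a b) := hFconv.continuousOn isOpen_Ioo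
  have hFNc : ∀ N, ContinuousOn (FN N) (Ioo a b) :=
    fun N => (hFNconv N).continuousOn isOpen_Ioo
  -- neBot instances for the endpoint filters
  haveI hNBa : (nhdsWithin a (Ioo a b)).NeBot := by
    rw [← mem_closure_iff_nhdsWithin_neBot, closure_Ioo hab.ne]
    exact left_mem_Icc.2 hab.le
  haveI hNBb : (nhdsWithin b (Ioo a b)).NeBot := by
    rw [← mem_closure_iff_nhdsWithin_neBot, closure_Ioo hab.ne]
    exact right_mem_Icc.2 hab.le
  -- a point p₀ ∈ (a, x*) with F p₀ > c
  obtain ⟨p₀, hp₀c, hp₀lt, hp₀mem⟩ :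
      ∃ p, c < F p ∧ p < xstar ∧ p ∈ Ioo a b := by
    have h1 : ∀ᶠ x in nhdsWithin a (Ioo a b), c < F x := hFa.eventually_gt_atTop c
    have h2 : ∀ᶠ x in nhdsWithin a (Ioo a b), x < xstar :=
      ((eventually_lt_nhds hax).filter_mono nhdsWithin_le_nhds)
    have h3 : ∀ᶠ x in nhdsWithin a (Ioo a b), x ∈ Ioo a b := self_mem_nhdsWithin
    exact ((h1.and h2).and h3).exists.imp fun p hp => ⟨hp.1.1, hp.1.2, hp.2⟩
  -- a point q₀ ∈ (x*, b) with F q₀ > c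
  obtain ⟨q₀, hq₀c, hq₀gt, hq₀mem⟩ :
      ∃ q, c < F q ∧ xstar < q ∧ q ∈ Ioo a b := by
    have h1 : ∀ᶠ x in nhdsWithin b (Ioo a b), c < F x := hFb.eventually_gt_atTop c
    have h2 : ∀ᶠ x in nhdsWithin b (Ioo a b), xstar < x :=
      ((eventually_gt_nhds hxb).filter_mono nhdsWithin_le_nhds)
    have h3 : ∀ᶠ x in nhdsWithin b (Ioo a b), x ∈ Ioo a b := self_mem_nhdsWithin
    exact ((h1.and h2).and h3).exists.imp fun q hq => ⟨hq.1.1, hq.1.2, hq.2⟩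
  have hsubL : Icc p₀ xstar ⊆ Ioo a b := Icc_subset_Ioo hp₀mem.1 hxb
  have hsubR : Icc xstar q₀ ⊆ Ioo a b := Icc_subset_Ioo hax hq₀mem.2
  -- existence of yminus
  obtain ⟨ym, hymI, hymF⟩ : ∃ y ∈ Ioo p₀ xstar, F y = c :=
    let h := intermediate_value_Ioo' hp₀lt.le (hFc.mono hsubL) (⟨hc, hp₀c⟩ : c ∈ Ioo (F xstar) (F p₀))
    ⟨h.choose, h.choose_spec.1, h.choose_spec.2⟩
  obtain ⟨yp, hypI, hypF⟩ : ∃ y ∈ Ioo xstar q₀, F y = c :=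
    let h := intermediate_value_Ioo hq₀gt.le (hFc.mono hsubR) (⟨hc, hq₀c⟩ : c ∈ Ioo (F xstar) (F q₀))
    ⟨h.choose, h.choose_spec.1, h.choose_spec.2⟩
  have hymIoo : ym ∈ Ioo a xstar := ⟨hp₀mem.1.trans hymI.1, hymI.2⟩
  have hypIoo : yp ∈ Ioo xstar b := ⟨hypI.1, hypI.2.trans hq₀mem.2⟩
  -- uniqueness for F on the left
  have huniqL : ∀ z ∈ Ioo a xstar, F z = c → z = ym := by
    intro z hz hzc
    rcases lt_trichotomy z ym with h | h | h
    · exact absurd hymF (ne_of_lt (between_lt_aux hFconv (hIooL hz) (⟨hax, hxb⟩ : xstar ∈ Ioo a b) h hymIoo.2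
        hzc.le hc.le (Or.inr hc)))
    · exact h
    · exact absurd hzc (ne_of_lt (between_lt_aux hFconv (hIooL hymIoo) (⟨hax, hxb⟩ : xstar ∈ Ioo a b) h hz.2
        hymF.le hc.le (Or.inr hc)))
  have huniqR : ∀ z ∈ Ioo xstar b, F z = c → z = yp := by
    intro z hz hzc
    rcases lt_trichotomy z yp with h | h | h
    · exact absurd hzc (ne_of_lt (between_lt_aux hFconv (⟨hax, hxb⟩ : xstar ∈ Ioo a b) (hIooR hypIoo) hz.1 h
        hc.le hypF.le (Or.inl hc)))
    · exact h
    · exact absurd hypF (ne_of_lt (between_lt_aux hFconv (⟨hax, hxb⟩ : xstar ∈ Ioo a b) (hIooR hz) hypIoo.1 h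
        hc.le hzc.le (Or.inl hc)))
  refine ⟨ym, yp, hymIoo, hypIoo, hymF, hypF, huniqL, huniqR, ?_⟩
  -- define u and v by choice
  set u : ℕ → ℝ := fun N =>
    if h : ∃ z, z ∈ Ioo a xstar ∧ FN N z = cN N then h.choose else ym with hu_def
  set v : ℕ → ℝ := fun N =>
    if h : ∃ z, z ∈ Ioo xstar b ∧ FN N z = cN N then h.choose else yp with hv_def
  -- the "good" event
  set G : ℕ → Prop := fun N =>
    FN N xstar < cN N ∧ (∃ z, z ∈ Ioo a xstar ∧ FN N z = cN N) ∧
      (∃ z, z ∈ Ioo xstar b ∧ FN N z = cN N) with hG_def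
  have hGev : ∀ᶠ N in atTop, G N := by
    have e1 : ∀ᶠ N in atTop, FN N xstar < cN N :=
      (hpt xstar ⟨hax, hxb⟩).eventually_lt hcN hc
    have e2 : ∀ᶠ N in atTop, cN N < FN N p₀ :=
      hcN.eventually_lt (hpt p₀ hp₀mem) hp₀c
    have e3 : ∀ᶠ N in atTop, cN N < FN N q₀ :=
      hcN.eventually_lt (hpt q₀ hq₀mem) hq₀c
    filter_upwards [e1, e2, e3] with N h1 h2 h3
    refine ⟨h1, ?_, ?_⟩
    · obtain ⟨z, hz, hzc⟩ := intermediate_value_Ioo' hp₀lt.le ((hFNc N).mono hsubL)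
        (⟨h1, h2⟩ : cN N ∈ Ioo (FN N xstar) (FN N p₀))
      exact ⟨z, ⟨hp₀mem.1.trans hz.1, hz.2⟩, hzc⟩
    · obtain ⟨z, hz, hzc⟩ := intermediate_value_Ioo hq₀gt.le ((hFNc N).mono hsubR)
        (⟨h1, h3⟩ : cN N ∈ Ioo (FN N xstar) (FN N q₀))
      exact ⟨z, ⟨hz.1, hz.2.trans hq₀mem.2⟩, hzc⟩
  -- under G, u and v are solutions on each side
  have hu_spec : ∀ N, G N → u N ∈ Ioo a xstar ∧ FN N (u N) = cN N := by
    intro N hG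
    simp only [hu_def, dif_pos hG.2.1]
    exact hG.2.1.choose_spec
  have hv_spec : ∀ N, G N → v N ∈ Ioo xstar b ∧ FN N (v N) = cN N := by
    intro N hG
    simp only [hv_def, dif_pos hG.2.2]
    exact hG.2.2.choose_spec
  -- under G, uniqueness of solutions on each side
  have huL : ∀ N, G N → ∀ z ∈ Ioo a xstar, FN N z = cN N → z = u N := by
    intro N hG z hz hzc
    obtain ⟨huI, huF⟩ := hu_spec N hG
    rcases lt_trichotomy z (u N) with h | h | h
    · exact absurd huF (ne_of_lt (between_lt_aux (hFNconv N) (hIooL hz) ⟨hax, hxb⟩ h huI.2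
        hzc.le hG.1.le (Or.inr hG.1)))
    · exact h
    · exact absurd hzc (ne_of_lt (between_lt_aux (hFNconv N) (hIooL huI) ⟨hax, hxb⟩ h hz.2
        huF.le hG.1.le (Or.inr hG.1)))
  have huR : ∀ N, G N → ∀ z ∈ Ioo xstar b, FN N z = cN N → z = v N := by
    intro N hG z hz hzc
    obtain ⟨hvI, hvF⟩ := hv_spec N hG
    rcases lt_trichotomy z (v N) with h | h | h
    · exact absurd hzc (ne_of_lt (between_lt_aux (hFNconv N) ⟨hax, hxb⟩ (hIooR hvI) hz.1 h
        hG.1.le hvF.le (Or.inl hG.1)))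
    · exact h
    · exact absurd hvF (ne_of_lt (between_lt_aux (hFNconv N) ⟨hax, hxb⟩ (hIooR hz) hvI.1 h
        hG.1.le hzc.le (Or.inl hG.1)))
  refine ⟨u, v, ?_, ?_, ?_⟩
  · -- u → ym
    rw [Metric.tendsto_atTop]
    intro ε hε
    set p : ℝ := max (ym - ε) ((a + ym) / 2) with hp_def
    set q : ℝ := min (ym + ε) ((ym + xstar) / 2) with hq_def
    have hap : a < p := lt_max_of_lt_right (by linarith [hymIoo.1])
    have hpym : p < ym := max_lt (by linarith) (by linarith [hymIoo.1])
    have hymq : ym < q := lt_min (by linarith) (by linarith [hymIoo.2])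
    have hqx : q < xstar := min_lt_of_right_lt (by linarith [hymIoo.2])
    have hpmem : p ∈ Ioo a b := ⟨hap, by linarith [hymIoo.2]⟩
    have hqmem : q ∈ Ioo a b := ⟨by linarith, by linarith⟩
    have hFp : c < F p :=
      outside_gt_left_aux hFconv hpmem (⟨hax, hxb⟩ : xstar ∈ Ioo a b) hpym hymIoo.2 hymF.ge hc
    have hFq : F q < c :=
      between_lt_aux hFconv (hIooL hymIoo) (⟨hax, hxb⟩ : xstar ∈ Ioo a b) hymq hqx hymF.le hc.le (Or.inr hc)
    have e1 : ∀ᶠ N in atTop, cN N < FN N p := hcN.eventually_lt (hpt p hpmem) hFp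
    have e2 : ∀ᶠ N in atTop, FN N q < cN N := (hpt q hqmem).eventually_lt hcN hFq
    have : ∀ᶠ N in atTop, dist (u N) ym < ε := by
      filter_upwards [e1, e2, hGev] with N h1 h2 hG
      obtain ⟨z, hz, hzc⟩ := intermediate_value_Ioo' (le_of_lt (hpym.trans hymq))
        ((hFNc N).mono (Icc_subset_Ioo hap hqmem.2))
        (⟨h2, h1⟩ : cN N ∈ Ioo (FN N q) (FN N p))
      have hzx : z ∈ Ioo a xstar := ⟨hap.trans hz.1, hz.2.trans hqx⟩
      have := huL N hG z hzx hzc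
      rw [← this]
      rw [Real.dist_eq, abs_lt]
      constructor
      · have : ym - ε ≤ p := le_max_left _ _
        linarith [hz.1]
      · have : q ≤ ym + ε := min_le_left _ _
        linarith [hz.2]
    exact eventually_atTop.1 this
  · -- v → yp
    rw [Metric.tendsto_atTop]
    intro ε hε
    set p : ℝ := max (yp - ε) ((xstar + yp) / 2) with hp_def
    set q : ℝ := min (yp + ε) ((yp + b) / 2) with hq_def
    have hxp : xstar < p := lt_max_of_lt_right (by linarith [hypIoo.1])
    have hpyp : p < yp := max_lt (by linarith) (by linarith [hypIoo.1])
    have hypq : yp < q := lt_min (by linarith) (by linarith [hypIoo.2])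
    have hqb : q < b := min_lt_of_right_lt (by linarith [hypIoo.2])
    have hpmem : p ∈ Ioo a b := ⟨hax.trans hxp, by linarith⟩
    have hqmem : q ∈ Ioo a b := ⟨by linarith, hqb⟩
    have hFp : F p < c :=
      between_lt_aux hFconv (⟨hax, hxb⟩ : xstar ∈ Ioo a b) (hIooR hypIoo) hxp hpyp hc.le hypF.le (Or.inl hc)
    have hFq : c < F q :=
      outside_gt_right_aux hFconv (⟨hax, hxb⟩ : xstar ∈ Ioo a b) hqmem hypIoo.1 hypq hypF.ge hc
    have e1 : ∀ᶠ N in atTop, FN N p < cN N := (hpt p hpmem).eventually_lt hcN hFp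
    have e2 : ∀ᶠ N in atTop, cN N < FN N q := hcN.eventually_lt (hpt q hqmem) hFq
    have : ∀ᶠ N in atTop, dist (v N) yp < ε := by
      filter_upwards [e1, e2, hGev] with N h1 h2 hG
      obtain ⟨z, hz, hzc⟩ := intermediate_value_Ioo (le_of_lt (hpyp.trans hypq))
        ((hFNc N).mono (Icc_subset_Ioo hpmem.1 hqb))
        (⟨h1, h2⟩ : cN N ∈ Ioo (FN N p) (FN N q))
      have hzx : z ∈ Ioo xstar b := ⟨hxp.trans hz.1, hz.2.trans hqb⟩
      have := huR N hG z hzx hzc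
      rw [← this]
      rw [Real.dist_eq, abs_lt]
      constructor
      · have : yp - ε ≤ p := le_max_left _ _
        linarith [hz.1]
      · have : q ≤ yp + ε := min_le_left _ _
        linarith [hz.2]
    exact eventually_atTop.1 this
  · -- the eventual statement
    filter_upwards [hGev] with N hG
    obtain ⟨huI, huF⟩ := hu_spec N hG
    obtain ⟨hvI, hvF⟩ := hv_spec N hG
    refine ⟨hIooL huI, hIooR hvI, huI.2.trans hvI.1, huF, hvF, ?_⟩
    intro z hz hzc
    rcases lt_trichotomy z xstar with h | h | h
    · exact Or.inl (huL N hG z ⟨hz.1, h⟩ hzc)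
    · exact absurd hzc (by rw [h]; exact ne_of_lt hG.1)
    · exact Or.inr (huR N hG z ⟨h, hz.2⟩ hzc)
end

section
/- Let f_N : ℝ₊ → ℝ be step functions at scale 1/m_N (with m_N → ∞), D_N f_N(x) = m_N(f_N(x+1/m_N) − f_N(x)) the discrete derivative, and f ∈ C¹(ℝ₊). If f_N → f and D_N f_N → f' both locally weakly in L², then f_N → f uniformly on compact subsets of ℝ₊. -/
open Filter Set Topology MeasureTheory
open scoped ENNReal

lemma bs_bound {μ : Measure ℝ} [IsFiniteMeasure μ] (u : ℕ → ℝ → ℝ)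
    (hu : ∀ N, MemLp (u N) 2 μ)
    (hconv : ∀ g : ℝ → ℝ, MemLp g 2 μ →
      ∃ L, Tendsto (fun N => ∫ x, u N x * g x ∂μ) atTop (nhds L)) :
    ∃ C : ℝ, 0 ≤ C ∧ ∀ N, ∀ s : Set ℝ, MeasurableSet s →
      |∫ x in s, u N x ∂μ| ≤ C * Real.sqrt ((μ s).toReal) := by
  set T : ℕ → (Lp ℝ 2 μ) →L[ℝ] ℝ := fun N => innerSL ℝ ((hu N).toLp (u N)) with hT
  have key : ∀ N (φ : Lp ℝ 2 μ), T N φ = ∫ x, u N x * φ x ∂μ := by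
    intro N φ
    have h1 : T N φ = ∫ x, ((hu N).toLp (u N) : ℝ → ℝ) x * φ x ∂μ := by
      simpa [hT, RCLike.inner_apply, conj_trivial, mul_comm] using
        (L2.inner_def (𝕜 := ℝ) ((hu N).toLp (u N)) φ)
    rw [h1]
    exact integral_congr_ae (((hu N).coeFn_toLp).mono fun x hx => by dsimp only; rw [hx])
  have bdd : ∀ φ : Lp ℝ 2 μ, ∃ C, ∀ N, ‖T N φ‖ ≤ C := by
    intro φ
    obtain ⟨L, hL⟩ := hconv φ (Lp.memLp φ)
    have h2 : Tendsto (fun N => ‖T N φ‖) atTop (nhds ‖L‖) := by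
      simp only [key]
      exact hL.norm
    obtain ⟨C, hC⟩ := h2.bddAbove_range
    exact ⟨C, fun N => hC ⟨N, rfl⟩⟩
  obtain ⟨C', hC'⟩ := banach_steinhaus bdd
  refine ⟨max C' 0, le_max_right _ _, ?_⟩
  intro N s hs
  have hμs : μ s ≠ ∞ := measure_ne_top μ s
  set ind := indicatorConstLp 2 hs hμs (1 : ℝ) with hind
  have h2 : T N ind = ∫ x in s, u N x ∂μ := by
    rw [key, ← integral_indicator hs]
    apply integral_congr_ae
    filter_upwards [indicatorConstLp_coeFn (p := 2) (hs := hs) (hμs := hμs) (c := (1:ℝ))]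
      with x hx
    rw [hx]
    by_cases hxs : x ∈ s <;> simp [Set.indicator, hxs]
  have h3 : ‖T N ind‖ ≤ ‖T N‖ * ‖ind‖ := (T N).le_opNorm ind
  have h4 : ‖ind‖ = Real.sqrt ((μ s).toReal) := by
    rw [hind, norm_indicatorConstLp two_ne_zero ENNReal.ofNat_ne_top]
    rw [Real.sqrt_eq_rpow]
    norm_num
    rfl
  rw [← h2] at *
  calc |T N ind| ≤ ‖T N‖ * ‖ind‖ := h3
    _ ≤ max C' 0 * Real.sqrt ((μ s).toReal) := by
        rw [h4]
        exact mul_le_mul ((hC' N).trans (le_max_left _ _)) le_rfl (Real.sqrt_nonneg _)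
          (le_max_right _ _)


/-- If `f_N` are step functions at scale `1/m_N` (`m_N → ∞`), `f ∈ C¹`, and
both `f_N → f` and `D_N f_N → f'` locally weakly in `L²` on `ℝ₊` (tested against local
`L²` functions), then `f_N → f` uniformly on compact subsets of `ℝ₊`. -/
theorem step_functions_weak_to_uniform
    (m : ℕ → ℝ) (hm : ∀ N, 0 < m N) (hm' : Tendsto m atTop atTop)
    (fN : ℕ → ℝ → ℝ) (f : ℝ → ℝ) (hf : ContDiff ℝ 1 f)
    (hstep : ∀ N, ∀ i : ℕ, ∀ x ∈ Ico ((i : ℝ) / m N) (((i : ℝ) + 1) / m N),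
      fN N x = fN N ((i : ℝ) / m N))
    (hweak_f : ∀ a b : ℝ, 0 ≤ a → a ≤ b → ∀ g : ℝ → ℝ,
      MemLp g 2 (volume.restrict (Icc a b)) →
      Tendsto (fun N => ∫ x in Icc a b, fN N x * g x) atTop
        (nhds (∫ x in Icc a b, f x * g x)))
    (hweak_D : ∀ a b : ℝ, 0 ≤ a → a ≤ b → ∀ g : ℝ → ℝ,
      MemLp g 2 (volume.restrict (Icc a b)) →
      Tendsto (fun N => ∫ x in Icc a b, (m N * (fN N (x + 1 / m N) - fN N x)) * g x) atTop
        (nhds (∫ x in Icc a b, deriv f x * g x))) :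
    ∀ a b : ℝ, 0 ≤ a → TendstoUniformlyOn (fun N x => fN N x) f atTop (Icc a b) := by
  intro a b ha
  rcases le_or_gt a b with hab | hab
  swap
  · rw [Icc_eq_empty (not_le.mpr hab)]; exact tendstoUniformlyOn_empty
  have hb : (0:ℝ) ≤ b := ha.trans hab
  suffices h : TendstoUniformlyOn (fun N x => fN N x) f atTop (Icc 0 b) from
    h.mono (Icc_subset_Icc ha le_rfl)
  clear hab ha a
  set c : ℝ := b + 1 with hc
  have hbc : b ≤ c := by linarith
  have hc0 : (0:ℝ) ≤ c := by linarith
  set μ : Measure ℝ := volume.restrict (Icc 0 c) with hμ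
  haveI : IsFiniteMeasure μ := ⟨by
    rw [hμ, Measure.restrict_apply_univ]; exact isCompact_Icc.measure_lt_top⟩
  -- evaluation at grid points
  have heval : ∀ N x, 0 ≤ x → fN N x = fN N ((⌊x * m N⌋₊ : ℝ) / m N) := by
    intro N x hx
    apply hstep N ⌊x * m N⌋₊ x
    constructor
    · rw [div_le_iff₀ (hm N)]
      exact Nat.floor_le (mul_nonneg hx (hm N).le)
    · rw [lt_div_iff₀ (hm N)]
      exact_mod_cast Nat.lt_floor_add_one (x * m N)
  -- measurability
  have hmeas : ∀ N, AEStronglyMeasurable (fN N) μ := by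
    intro N
    have hM : Measurable fun x : ℝ => fN N ((⌊x * m N⌋₊ : ℝ) / m N) :=
      (measurable_from_nat (f := fun n : ℕ => fN N ((n : ℝ) / m N))).comp
        (Nat.measurable_floor.comp (measurable_id.mul_const (m N)))
    refine hM.aestronglyMeasurable.congr ?_
    rw [hμ]
    exact (ae_restrict_iff' measurableSet_Icc).mpr
      (ae_of_all _ fun x hx => (heval N x hx.1).symm)
  have hmeas2 : ∀ N, AEStronglyMeasurable (fun x => m N * (fN N (x + 1 / m N) - fN N x)) μ := by
    intro N
    have hM : Measurable fun x : ℝ =>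
        m N * (fN N ((⌊(x + 1 / m N) * m N⌋₊ : ℝ) / m N) - fN N ((⌊x * m N⌋₊ : ℝ) / m N)) := by
      apply Measurable.const_mul
      apply Measurable.sub
      · exact (measurable_from_nat (f := fun n : ℕ => fN N ((n : ℝ) / m N))).comp
          (Nat.measurable_floor.comp ((measurable_id.add_const (1 / m N)).mul_const (m N)))
      · exact (measurable_from_nat (f := fun n : ℕ => fN N ((n : ℝ) / m N))).comp
          (Nat.measurable_floor.comp (measurable_id.mul_const (m N)))
    refine hM.aestronglyMeasurable.congr ?_
    rw [hμ]
    refine (ae_restrict_iff' measurableSet_Icc).mpr (ae_of_all _ fun x hx => ?_)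
    have h1 : 0 ≤ x + 1 / m N := by
      have := hx.1; have := (hm N); positivity
    dsimp only
    rw [← heval N x hx.1, ← heval N _ h1]
  -- boundedness on compacts
  have hbdd : ∀ N (T : ℝ), ∃ B, ∀ x ∈ Icc (0:ℝ) T, |fN N x| ≤ B := by
    intro N T
    set K := ⌊T * m N⌋₊ with hK
    refine ⟨∑ i ∈ Finset.range (K + 1), |fN N ((i : ℝ) / m N)|, ?_⟩
    intro x hx
    rw [heval N x hx.1]
    refine Finset.single_le_sum (f := fun i : ℕ => |fN N ((i : ℝ) / m N)|)
      (fun i _ => abs_nonneg _) ?_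
    rw [Finset.mem_range, Nat.lt_succ_iff]
    exact Nat.floor_le_floor (mul_le_mul_of_nonneg_right hx.2 (hm N).le)
  -- MemLp facts
  have hmem : ∀ N, MemLp (fN N) 2 μ := by
    intro N
    obtain ⟨B, hB⟩ := hbdd N c
    refine MemLp.of_bound (hmeas N) B ?_
    rw [hμ]
    exact (ae_restrict_iff' measurableSet_Icc).mpr
      (ae_of_all _ fun x hx => by simpa [Real.norm_eq_abs] using hB x hx)
  have hfc : Continuous f := hf.continuous
  have hmemf : MemLp f 2 μ := by
    obtain ⟨B, hB⟩ := isCompact_Icc.exists_bound_of_continuousOn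
      (s := Icc (0:ℝ) c) hfc.continuousOn
    refine MemLp.of_bound (hfc.aestronglyMeasurable.restrict) B ?_
    rw [hμ]
    exact (ae_restrict_iff' measurableSet_Icc).mpr (ae_of_all _ fun x hx => hB x hx)
  have hmemd : ∀ N, MemLp (fun x => fN N x - f x) 2 μ := fun N => (hmem N).sub hmemf
  have hmemg : ∀ N, MemLp (fun x => m N * (fN N (x + 1 / m N) - fN N x)) 2 μ := by
    intro N
    obtain ⟨B, hB⟩ := hbdd N c
    obtain ⟨B', hB'⟩ := hbdd N (c + 1 / m N)
    refine MemLp.of_bound (hmeas2 N) (m N * (B' + B)) ?_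
    rw [hμ]
    refine (ae_restrict_iff' measurableSet_Icc).mpr (ae_of_all _ fun x hx => ?_)
    have h1 : x + 1 / m N ∈ Icc (0:ℝ) (c + 1 / m N) := by
      constructor
      · have := hx.1; have := (hm N); positivity
      · have := hx.2; have := (hm N); linarith
    have h2 : x ∈ Icc (0:ℝ) c := hx
    have e1 := hB' _ h1
    have e2 := hB x h2
    have : |fN N (x + 1 / m N) - fN N x| ≤ B' + B := by
      calc |fN N (x + 1 / m N) - fN N x| ≤ |fN N (x + 1 / m N)| + |fN N x| := abs_sub _ _
        _ ≤ B' + B := add_le_add e1 e2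
    rw [Real.norm_eq_abs, abs_mul, abs_of_pos (hm N)]
    exact mul_le_mul_of_nonneg_left this (hm N).le

  -- restriction helpers
  have hres : ∀ s : Set ℝ, MeasurableSet s → s ⊆ Icc 0 c → ∀ F : ℝ → ℝ,
      ∫ x in s, F x ∂μ = ∫ x in s, F x := by
    intro s hs hsub F
    rw [hμ, Measure.restrict_restrict hs, inter_eq_self_of_subset_left hsub]
  have hμeq : ∀ s : Set ℝ, MeasurableSet s → s ⊆ Icc 0 c → μ s = volume s := by
    intro s hs hsub
    rw [hμ, Measure.restrict_apply hs, inter_eq_self_of_subset_left hsub]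
  -- integrability of products with an L² function
  have hgint : ∀ g : ℝ → ℝ, MemLp g 2 μ → Integrable g μ := fun g hg =>
    hg.integrable one_le_two
  have hint1 : ∀ (g : ℝ → ℝ), MemLp g 2 μ → ∀ N, Integrable (fun x => fN N x * g x) μ := by
    intro g hg N
    obtain ⟨B, hB⟩ := hbdd N c
    refine (hgint g hg).bdd_mul (c := B) (hmeas N) ?_
    rw [hμ]
    exact (ae_restrict_iff' measurableSet_Icc).mpr
      (ae_of_all _ fun x hx => by simpa [Real.norm_eq_abs] using hB x hx)
  have hint2 : ∀ (g : ℝ → ℝ), MemLp g 2 μ → Integrable (fun x => f x * g x) μ := by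
    intro g hg
    obtain ⟨B, hB⟩ := isCompact_Icc.exists_bound_of_continuousOn
      (s := Icc (0:ℝ) c) hfc.continuousOn
    refine (hgint g hg).bdd_mul (c := B) hfc.aestronglyMeasurable.restrict ?_
    rw [hμ]
    exact (ae_restrict_iff' measurableSet_Icc).mpr (ae_of_all _ fun x hx => hB x hx)
  -- Banach–Steinhaus bounds
  have hconv1 : ∀ g : ℝ → ℝ, MemLp g 2 μ →
      ∃ L, Tendsto (fun N => ∫ x, (fN N x - f x) * g x ∂μ) atTop (nhds L) := by
    intro g hg
    refine ⟨0, ?_⟩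
    have he : ∀ N, ∫ x, (fN N x - f x) * g x ∂μ
        = (∫ x, fN N x * g x ∂μ) - ∫ x, f x * g x ∂μ := by
      intro N
      have hfun : (fun x => (fN N x - f x) * g x)
          = fun x => fN N x * g x - f x * g x := by funext x; ring
      rw [hfun]
      exact integral_sub (hint1 g hg N) (hint2 g hg)
    simp only [he]
    have h1 := hweak_f 0 c le_rfl hc0 g (hμ ▸ hg)
    have h2 := h1.sub (tendsto_const_nhds (x := ∫ x in Icc 0 c, f x * g x)
      (f := atTop (α := ℕ)))
    rw [hμ]
    simpa using h2
  have hconv2 : ∀ g : ℝ → ℝ, MemLp g 2 μ →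
      ∃ L, Tendsto (fun N => ∫ x, (m N * (fN N (x + 1 / m N) - fN N x)) * g x ∂μ)
        atTop (nhds L) := by
    intro g hg
    exact ⟨∫ x in Icc 0 c, deriv f x * g x, by
      have := hweak_D 0 c le_rfl hc0 g (hμ ▸ hg)
      rw [hμ]; exact this⟩
  obtain ⟨Cf, hCf0, hCf⟩ := bs_bound (μ := μ) (fun N x => fN N x - f x) hmemd hconv1
  obtain ⟨Cg, hCg0, hCg⟩ := bs_bound (μ := μ)
    (fun N x => m N * (fN N (x + 1 / m N) - fN N x)) hmemg hconv2
  -- telescoping over grid cells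
  have hcell : ∀ N (k : ℕ), ∫ x in Ico ((k:ℝ)/m N) (((k:ℝ)+1)/m N),
      (m N * (fN N (x + 1/m N) - fN N x))
      = fN N (((k:ℝ)+1)/m N) - fN N ((k:ℝ)/m N) := by
    intro N k
    have h1 : EqOn (fun x => m N * (fN N (x + 1/m N) - fN N x))
        (fun _ => m N * (fN N (((k:ℝ)+1)/m N) - fN N ((k:ℝ)/m N)))
        (Ico ((k:ℝ)/m N) (((k:ℝ)+1)/m N)) := by
      intro x hx
      have e1 : fN N x = fN N ((k:ℝ)/m N) := hstep N k x hx
      have e2 : fN N (x + 1/m N) = fN N (((k:ℝ)+1)/m N) := by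
        have hmem1 : x + 1/m N ∈ Ico (((k+1:ℕ):ℝ)/m N) ((((k+1:ℕ):ℝ)+1)/m N) := by
          have hA := hx.1; have hB := hx.2
          constructor
          · push_cast
            rw [add_div]
            have : (k:ℝ)/m N + 1/m N ≤ x + 1/m N := by linarith
            exact this
          · push_cast
            rw [add_div, add_div]
            have h3 : (k:ℝ)/m N + 1/m N = ((k:ℝ)+1)/m N := by rw [add_div]
            have : x + 1/m N < ((k:ℝ)+1)/m N + 1/m N := by linarith
            linarith [this]
        have := hstep N (k+1) (x + 1/m N) hmem1
        push_cast at this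
        exact this
      dsimp only
      rw [e1, e2]
    rw [setIntegral_congr_fun measurableSet_Ico h1, setIntegral_const]
    rw [measureReal_def, Real.volume_Ico]
    have h2 : ((k:ℝ)+1)/m N - (k:ℝ)/m N = 1 / m N := by
      rw [div_sub_div_same]; ring_nf
    rw [h2, ENNReal.toReal_ofReal (one_div_nonneg.mpr (hm N).le), smul_eq_mul]
    field_simp
    exact mul_div_cancel_left₀ _ (hm N).ne'
  have hIntg : ∀ N, IntegrableOn (fun x => m N * (fN N (x + 1/m N) - fN N x))
      (Icc 0 c) volume := fun N => (hmemg N).integrable one_le_two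
  have htel : ∀ N (i j : ℕ), i ≤ j → (j:ℝ)/m N ≤ c →
      ∫ x in Ico ((i:ℝ)/m N) ((j:ℝ)/m N), (m N * (fN N (x + 1/m N) - fN N x))
        = fN N ((j:ℝ)/m N) - fN N ((i:ℝ)/m N) := by
    intro N i j hij hjc
    induction j, hij using Nat.le_induction with
    | base => simp
    | succ j hij ih =>
      have hjj : (j:ℝ)/m N ≤ ((j:ℝ)+1)/m N := by
        exact (div_le_div_iff_of_pos_right (hm N)).mpr (by linarith)
      have hjc' : (j:ℝ)/m N ≤ c := by
        refine le_trans hjj ?_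
        have : (((j+1:ℕ)):ℝ)/m N ≤ c := hjc
        push_cast at this
        exact this
      have e := ih hjc'
      have hji : (i:ℝ)/m N ≤ (j:ℝ)/m N :=
        (div_le_div_iff_of_pos_right (hm N)).mpr (by exact_mod_cast hij)
      have hsub1 : Ico ((i:ℝ)/m N) ((j:ℝ)/m N) ⊆ Icc 0 c := fun x hx =>
        ⟨le_trans (div_nonneg (Nat.cast_nonneg _) (hm N).le) hx.1, hx.2.le.trans hjc'⟩
      have hjc2 : ((j:ℝ)+1)/m N ≤ c := by
        have : (((j+1:ℕ)):ℝ)/m N ≤ c := hjc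
        push_cast at this
        exact this
      have hsub2 : Ico ((j:ℝ)/m N) (((j:ℝ)+1)/m N) ⊆ Icc 0 c := fun x hx =>
        ⟨le_trans (div_nonneg (Nat.cast_nonneg _) (hm N).le) hx.1, hx.2.le.trans hjc2⟩
      push_cast
      rw [← Ico_union_Ico_eq_Ico hji hjj,
        setIntegral_union (Set.Ico_disjoint_Ico_same) measurableSet_Ico
          ((hIntg N).mono_set hsub1) ((hIntg N).mono_set hsub2),
        e, hcell N j]
      ring
  -- Hölder estimate on grid points
  have hgrid : ∀ N (i j : ℕ), i ≤ j → (j:ℝ)/m N ≤ c →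
      |fN N ((j:ℝ)/m N) - fN N ((i:ℝ)/m N)|
        ≤ Cg * Real.sqrt ((j:ℝ)/m N - (i:ℝ)/m N) := by
    intro N i j hij hjc
    have hji : (i:ℝ)/m N ≤ (j:ℝ)/m N := by
      exact (div_le_div_iff_of_pos_right (hm N)).mpr (by exact_mod_cast hij)
    have hsub : Ico ((i:ℝ)/m N) ((j:ℝ)/m N) ⊆ Icc 0 c := fun x hx =>
      ⟨le_trans (div_nonneg (Nat.cast_nonneg _) (hm N).le) hx.1, hx.2.le.trans hjc⟩
    have h1 := hCg N (Ico ((i:ℝ)/m N) ((j:ℝ)/m N)) measurableSet_Ico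
    rw [hres _ measurableSet_Ico hsub, htel N i j hij hjc,
      hμeq _ measurableSet_Ico hsub, Real.volume_Ico,
      ENNReal.toReal_ofReal (by linarith)] at h1
    exact h1
  -- Hölder estimate for arbitrary points
  have hoelder : ∀ N x y, 0 ≤ x → x ≤ y → y ≤ c →
      |fN N y - fN N x| ≤ Cg * Real.sqrt (y - x + 1/m N) := by
    intro N x y hx hxy hyc
    have h0y : 0 ≤ y := hx.trans hxy
    have hij : ⌊x * m N⌋₊ ≤ ⌊y * m N⌋₊ :=
      Nat.floor_le_floor (mul_le_mul_of_nonneg_right hxy (hm N).le)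
    have hjm : ((⌊y * m N⌋₊ : ℕ):ℝ)/m N ≤ y := by
      rw [div_le_iff₀ (hm N)]
      exact Nat.floor_le (mul_nonneg h0y (hm N).le)
    have him : x - 1/m N ≤ ((⌊x * m N⌋₊ : ℕ):ℝ)/m N := by
      rw [le_div_iff₀ (hm N)]
      have h2 := Nat.lt_floor_add_one (x * m N)
      have h3 : (x - 1/m N) * m N = x * m N - 1 := by
        rw [sub_mul, one_div, inv_mul_cancel₀ (hm N).ne']
      rw [h3]
      linarith
    rw [heval N x hx, heval N y h0y]
    refine le_trans (hgrid N _ _ hij (hjm.trans hyc)) ?_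
    refine mul_le_mul_of_nonneg_left (Real.sqrt_le_sqrt ?_) hCg0
    linarith
  -- the cumulative function H and its uniform smallness
  have hIntd : ∀ N, Integrable (fun x => fN N x - f x) μ := fun N =>
    (hmemd N).integrable one_le_two
  have hHadd : ∀ N (z w : ℝ), 0 ≤ z → z ≤ w →
      (∫ t in Icc 0 w, (fN N t - f t) ∂μ) - (∫ t in Icc 0 z, (fN N t - f t) ∂μ)
        = ∫ t in Ioc z w, (fN N t - f t) ∂μ := by
    intro N z w h0 hzw
    have hdisj : Disjoint (Icc (0:ℝ) z) (Ioc z w) :=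
      Set.disjoint_left.mpr fun t ht ht' => absurd ht.2 (not_le.mpr ht'.1)
    rw [← Icc_union_Ioc_eq_Icc h0 hzw,
      setIntegral_union hdisj measurableSet_Ioc
        ((hIntd N).integrableOn) ((hIntd N).integrableOn)]
    ring
  have hHpt : ∀ z, 0 ≤ z → z ≤ c →
      Tendsto (fun N => ∫ t in Icc 0 z, (fN N t - f t) ∂μ) atTop (nhds 0) := by
    intro z h0 hzc
    have hind : MemLp ((Icc (0:ℝ) z).indicator fun _ => (1:ℝ)) 2 μ :=
      memLp_indicator_const 2 measurableSet_Icc 1 (Or.inr (measure_ne_top μ _))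
    have hkey : ∀ F : ℝ → ℝ,
        ∫ t, F t * (Icc (0:ℝ) z).indicator (fun _ => (1:ℝ)) t ∂μ
          = ∫ t in Icc 0 z, F t ∂μ := by
      intro F
      conv_rhs => rw [← integral_indicator measurableSet_Icc]
      refine integral_congr_ae (ae_of_all _ fun t => ?_)
      by_cases ht : t ∈ Icc (0:ℝ) z <;> simp [Set.indicator, ht]
    have hIf : Integrable f μ := hmemf.integrable one_le_two
    have hIN : ∀ N, Integrable (fN N) μ := fun N => (hmem N).integrable one_le_two
    have he : ∀ N, ∫ t in Icc 0 z, (fN N t - f t) ∂μ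
        = (∫ t, fN N t * (Icc (0:ℝ) z).indicator (fun _ => (1:ℝ)) t ∂μ)
          - ∫ t, f t * (Icc (0:ℝ) z).indicator (fun _ => (1:ℝ)) t ∂μ := by
      intro N
      rw [hkey (fN N), hkey f]
      exact integral_sub ((hIN N).integrableOn) hIf.integrableOn
    simp only [he]
    have h1 := hweak_f 0 c le_rfl hc0 _ (hμ ▸ hind)
    have h2 := h1.sub (tendsto_const_nhds
      (x := ∫ x in Icc 0 c, f x * (Icc (0:ℝ) z).indicator (fun _ => (1:ℝ)) x)
      (f := atTop (α := ℕ)))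
    rw [hμ]
    simpa using h2
  have hHdiff : ∀ N (z w : ℝ), 0 ≤ z → z ≤ w → w ≤ c →
      |(∫ t in Icc 0 w, (fN N t - f t) ∂μ) - ∫ t in Icc 0 z, (fN N t - f t) ∂μ|
        ≤ Cf * Real.sqrt (w - z) := by
    intro N z w h0 hzw hwc
    rw [hHadd N z w h0 hzw]
    have h1 := hCf N (Ioc z w) measurableSet_Ioc
    have hμI : (μ (Ioc z w)).toReal ≤ w - z := by
      rw [hμ, Measure.restrict_apply measurableSet_Ioc]
      have hmono : volume (Ioc z w ∩ Icc 0 c) ≤ volume (Ioc z w) :=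
        measure_mono inter_subset_left
      calc (volume (Ioc z w ∩ Icc 0 c)).toReal
          ≤ (volume (Ioc z w)).toReal := ENNReal.toReal_mono
            (by rw [Real.volume_Ioc]; exact ENNReal.ofReal_ne_top) hmono
        _ = w - z := by rw [Real.volume_Ioc, ENNReal.toReal_ofReal (by linarith)]
    exact h1.trans (mul_le_mul_of_nonneg_left (Real.sqrt_le_sqrt hμI) hCf0)
  have hHsmall : ∀ η : ℝ, 0 < η → ∀ᶠ N in atTop, ∀ z ∈ Icc (0:ℝ) c,
      |∫ t in Icc 0 z, (fN N t - f t) ∂μ| ≤ η := by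
    intro η hη
    set ρ : ℝ := (η / (2 * (Cf + 1)))^2 with hρ
    have hρpos : 0 < ρ := by positivity
    have hCfρ : Cf * Real.sqrt ρ ≤ η / 2 := by
      rw [hρ, Real.sqrt_sq (by positivity)]
      have h1 : Cf * (η / (2 * (Cf + 1))) = Cf * η / (2 * (Cf + 1)) := by ring
      rw [h1, div_le_iff₀ (by positivity : (0:ℝ) < 2 * (Cf + 1))]
      nlinarith [hη.le, hCf0]
    set K := ⌊c / ρ⌋₊ with hK
    have hnet : ∀ᶠ N in atTop, ∀ k ∈ Finset.range (K + 1),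
        |∫ t in Icc 0 (min ((k:ℝ) * ρ) c), (fN N t - f t) ∂μ| ≤ η / 2 := by
      rw [eventually_all_finset]
      intro k _
      have h0k : 0 ≤ min ((k:ℝ) * ρ) c := le_min (by positivity) hc0
      have ht := hHpt (min ((k:ℝ) * ρ) c) h0k (min_le_right _ _)
      have ht2 := Metric.tendsto_nhds.mp ht (η/2) (by positivity)
      filter_upwards [ht2] with N hN
      rw [Real.dist_eq, sub_zero] at hN
      exact hN.le
    filter_upwards [hnet] with N hN z hz
    set k := ⌊z / ρ⌋₊ with hk
    have hkK : k ∈ Finset.range (K + 1) := by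
      rw [Finset.mem_range, Nat.lt_succ_iff, hk, hK]
      exact Nat.floor_le_floor ((div_le_div_iff_of_pos_right hρpos).mpr hz.2)
    have hkz : (k:ℝ) * ρ ≤ z := by
      rw [hk, ← le_div_iff₀ hρpos]
      exact Nat.floor_le (div_nonneg hz.1 hρpos.le)
    have hmin : min ((k:ℝ)*ρ) c = (k:ℝ)*ρ := min_eq_left (hkz.trans hz.2)
    have hzk : z - (k:ℝ)*ρ ≤ ρ := by
      have h2 := Nat.lt_floor_add_one (z / ρ)
      rw [div_lt_iff₀ hρpos] at h2
      rw [hk]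
      push_cast
      nlinarith
    have h1 := hHdiff N ((k:ℝ)*ρ) z (by positivity) hkz hz.2
    have h2 := hN k hkK
    rw [hmin] at h2
    have h3 : |∫ t in Icc 0 z, (fN N t - f t) ∂μ|
        ≤ |(∫ t in Icc 0 z, (fN N t - f t) ∂μ)
            - ∫ t in Icc 0 ((k:ℝ)*ρ), (fN N t - f t) ∂μ|
          + |∫ t in Icc 0 ((k:ℝ)*ρ), (fN N t - f t) ∂μ| := by
      have := abs_add_le ((∫ t in Icc 0 z, (fN N t - f t) ∂μ)
          - ∫ t in Icc 0 ((k:ℝ)*ρ), (fN N t - f t) ∂μ)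
        (∫ t in Icc 0 ((k:ℝ)*ρ), (fN N t - f t) ∂μ)
      simpa using this
    have h4 : Cf * Real.sqrt (z - (k:ℝ)*ρ) ≤ Cf * Real.sqrt ρ :=
      mul_le_mul_of_nonneg_left (Real.sqrt_le_sqrt hzk) hCf0
    linarith
  -- uniform continuity of f
  have hfu : ∀ ε' : ℝ, 0 < ε' → ∃ δ₁, 0 < δ₁ ∧ ∀ x ∈ Icc (0:ℝ) c, ∀ t ∈ Icc (0:ℝ) c,
      |t - x| ≤ δ₁ → |f t - f x| ≤ ε' := by
    intro ε' hε'
    have hu := (isCompact_Icc (a := (0:ℝ)) (b := c)).uniformContinuousOn_of_continuous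
      hfc.continuousOn
    rw [Metric.uniformContinuousOn_iff] at hu
    obtain ⟨δ', hδ'pos, hδ'⟩ := hu ε' hε'
    refine ⟨δ'/2, by positivity, fun x hx t ht hd => ?_⟩
    have := hδ' t ht x hx (by rw [Real.dist_eq]; linarith)
    rw [Real.dist_eq] at this
    exact this.le
  -- final assembly
  rw [Metric.tendstoUniformlyOn_iff]
  intro ε hε
  set ε' := ε / 4 with hε'def
  have hε'pos : 0 < ε' := by positivity
  obtain ⟨δ₁, hδ₁pos, hδ₁⟩ := hfu ε' hε'pos
  set δ : ℝ := min (min 1 δ₁) ((ε' / (Cg + 1))^2 / 2) with hδdef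
  have hδpos : 0 < δ := lt_min (lt_min one_pos hδ₁pos) (by positivity)
  have hδ1 : δ ≤ 1 := le_trans (min_le_left _ _) (min_le_left _ _)
  have hδδ₁ : δ ≤ δ₁ := le_trans (min_le_left _ _) (min_le_right _ _)
  have hδ2 : 2 * δ ≤ (ε' / (Cg + 1))^2 := by
    have := min_le_right (min 1 δ₁) ((ε' / (Cg + 1))^2 / 2)
    rw [← hδdef] at this
    linarith
  have hCgδ : Cg * Real.sqrt (2 * δ) ≤ ε' := by
    have h1 : Real.sqrt (2*δ) ≤ ε' / (Cg + 1) := by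
      rw [show (ε' / (Cg+1)) = Real.sqrt ((ε'/(Cg+1))^2) from
        (Real.sqrt_sq (by positivity)).symm]
      exact Real.sqrt_le_sqrt hδ2
    calc Cg * Real.sqrt (2*δ) ≤ Cg * (ε'/(Cg+1)) :=
        mul_le_mul_of_nonneg_left h1 hCg0
      _ ≤ ε' := by
        rw [mul_div_assoc']
        rw [div_le_iff₀ (by linarith : (0:ℝ) < Cg+1)]
        nlinarith [hε'pos.le]
  have hm1 : ∀ᶠ N in atTop, 1 / m N ≤ δ := by
    filter_upwards [hm'.eventually_ge_atTop (1/δ)] with N hN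
    rw [div_le_iff₀ (hm N)]
    have h2 : δ * (1/δ) ≤ δ * m N := mul_le_mul_of_nonneg_left hN hδpos.le
    rw [mul_one_div, div_self hδpos.ne'] at h2
    linarith
  have hH := hHsmall (ε' * δ / 2) (by positivity)
  filter_upwards [hm1, hH] with N h1N h2N
  intro x hx
  have hx0 : (0:ℝ) ≤ x := hx.1
  have hxb : x ≤ b := hx.2
  have hxd : x + δ ≤ c := by rw [hc]; linarith
  have hsub_s : Icc x (x + δ) ⊆ Icc 0 c := fun t ht =>
    ⟨hx0.trans ht.1, ht.2.trans hxd⟩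
  have hsvol : (volume (Icc x (x + δ))).toReal = δ := by
    rw [Real.volume_Icc, ENNReal.toReal_ofReal (by linarith)]
    ring
  have hsfin : volume (Icc x (x + δ)) < ⊤ := by
    rw [Real.volume_Icc]; exact ENNReal.ofReal_lt_top
  have hint1' : IntegrableOn (fN N) (Icc x (x + δ)) volume :=
    IntegrableOn.mono_set ((hmem N).integrable one_le_two) hsub_s
  have hint2' : IntegrableOn f (Icc x (x + δ)) volume := hfc.integrableOn_Icc
  have hint3' : IntegrableOn (fun t => fN N t - f t) (Icc x (x + δ)) volume :=
    hint1'.sub hint2'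
  have hint0 : IntegrableOn (fun _ : ℝ => fN N x) (Icc x (x + δ)) volume :=
    integrableOn_const hsfin.ne
  have hint0' : IntegrableOn (fun _ : ℝ => f x) (Icc x (x + δ)) volume :=
    integrableOn_const hsfin.ne
  have hdecomp : fN N x - f x = δ⁻¹ *
      ((∫ t in Icc x (x + δ), (fN N x - fN N t))
        + ((∫ t in Icc x (x + δ), (fN N t - f t))
          + ∫ t in Icc x (x + δ), (f t - f x))) := by
    have ia : IntegrableOn (fun t : ℝ => fN N x - fN N t) (Icc x (x+δ)) volume :=
      hint0.sub hint1'
    have ic : IntegrableOn (fun t : ℝ => f t - f x) (Icc x (x+δ)) volume :=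
      hint2'.sub hint0'
    have ibc : IntegrableOn (fun t : ℝ => (fN N t - f t) + (f t - f x))
        (Icc x (x+δ)) volume := hint3'.add ic
    have e1 : (∫ t in Icc x (x + δ), (fN N x - fN N t))
        + ((∫ t in Icc x (x + δ), (fN N t - f t))
          + ∫ t in Icc x (x + δ), (f t - f x))
        = ∫ t in Icc x (x + δ),
            ((fN N x - fN N t) + ((fN N t - f t) + (f t - f x))) := by
      rw [← integral_add hint3' ic, ← integral_add ia ibc]
    rw [e1]
    have e2 : ∀ t : ℝ, (fN N x - fN N t) + ((fN N t - f t) + (f t - f x))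
        = fN N x - f x := fun t => by ring
    simp only [e2]
    rw [setIntegral_const, measureReal_def, hsvol, smul_eq_mul]
    field_simp
  have hb1 : |∫ t in Icc x (x + δ), (fN N x - fN N t)| ≤ ε' * δ := by
    have hC : ∀ t ∈ Icc x (x + δ), ‖fN N x - fN N t‖ ≤ Cg * Real.sqrt (2 * δ) := by
      intro t ht
      rw [Real.norm_eq_abs, abs_sub_comm]
      refine le_trans (hoelder N x t hx0 ht.1 (ht.2.trans hxd)) ?_
      refine mul_le_mul_of_nonneg_left (Real.sqrt_le_sqrt ?_) hCg0
      have := ht.2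
      linarith
    have h1 := norm_setIntegral_le_of_norm_le_const hsfin hC
    rw [Real.norm_eq_abs] at h1
    refine h1.trans ?_
    rw [measureReal_def, hsvol]
    exact mul_le_mul_of_nonneg_right hCgδ hδpos.le
  have hb3 : |∫ t in Icc x (x + δ), (f t - f x)| ≤ ε' * δ := by
    have hC : ∀ t ∈ Icc x (x + δ), ‖f t - f x‖ ≤ ε' := by
      intro t ht
      rw [Real.norm_eq_abs]
      refine hδ₁ x ⟨hx0, hxb.trans hbc⟩ t (hsub_s ht) ?_
      have h2 := ht.1; have h3 := ht.2
      rw [abs_le]; constructor <;> linarith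
    have h1 := norm_setIntegral_le_of_norm_le_const hsfin hC
    rw [Real.norm_eq_abs] at h1
    refine h1.trans ?_
    rw [measureReal_def, hsvol]
  have hb2 : |∫ t in Icc x (x + δ), (fN N t - f t)| ≤ ε' * δ := by
    have e3 : ∫ t in Icc x (x + δ), (fN N t - f t)
        = (∫ t in Icc 0 (x+δ), (fN N t - f t) ∂μ)
          - ∫ t in Icc 0 x, (fN N t - f t) ∂μ := by
      rw [hHadd N x (x+δ) hx0 (by linarith)]
      rw [← hres _ measurableSet_Icc hsub_s, integral_Icc_eq_integral_Ioc]
    rw [e3]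
    have hA := h2N (x+δ) ⟨by linarith, hxd⟩
    have hB := h2N x ⟨hx0, hxb.trans hbc⟩
    calc |(∫ t in Icc 0 (x+δ), (fN N t - f t) ∂μ)
          - ∫ t in Icc 0 x, (fN N t - f t) ∂μ|
        ≤ |∫ t in Icc 0 (x+δ), (fN N t - f t) ∂μ|
          + |∫ t in Icc 0 x, (fN N t - f t) ∂μ| := abs_sub _ _
      _ ≤ ε' * δ / 2 + ε' * δ / 2 := add_le_add hA hB
      _ = ε' * δ := by ring
  have habs : |fN N x - f x| ≤ δ⁻¹ * (3 * (ε' * δ)) := by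
    rw [hdecomp, abs_mul, abs_of_nonneg (inv_nonneg.mpr hδpos.le)]
    refine mul_le_mul_of_nonneg_left ?_ (inv_nonneg.mpr hδpos.le)
    have t1 := abs_add_le (∫ t in Icc x (x + δ), (fN N x - fN N t))
      ((∫ t in Icc x (x + δ), (fN N t - f t)) + ∫ t in Icc x (x + δ), (f t - f x))
    have t2 := abs_add_le (∫ t in Icc x (x + δ), (fN N t - f t))
      (∫ t in Icc x (x + δ), (f t - f x))
    linarith
  have hfinal : |fN N x - f x| ≤ 3 * ε' := by
    rw [show δ⁻¹ * (3 * (ε' * δ)) = 3 * ε' * (δ⁻¹ * δ) by ring,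
      inv_mul_cancel₀ hδpos.ne', mul_one] at habs
    exact habs
  rw [Real.dist_eq]
  have : |f x - fN N x| = |fN N x - f x| := abs_sub_comm _ _
  rw [this]
  linarith
end
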